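/- arXiv:1112.6403 — 5 statements merged into one kernel-verified Lean document; each statement's English description precedes it below -/
import Mathlib

section
/- Let G be a compact abelian group with Haar measure m, and A, B ⊆ G measurable with m_*(A + B) < m(A) + m(B). Then the difference set A − B is periodic with period H := H(A+B), i.e., A − B = (A − B) + H. -/
open MeasureTheory Set Pointwise
open scoped ENNReal symmDiff

/-- The inner Haar measure: supremum of measures of compact subsets. -/
noncomputable def innerHaar {G : Type*} [MeasurableSpace G] [TopologicalSpace G]
    (μ : MeasureTheory.Measure G) (S : Set G) : ℝ≥0∞ :=
  ⨆ (E : Set G) (_ : E ⊆ S) (_ : IsCompact E), μ E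

theorem difference_set_periodic
    {G : Type*} [AddCommGroup G] [TopologicalSpace G] [IsTopologicalAddGroup G]
    [CompactSpace G] [MeasurableSpace G] [BorelSpace G]
    (μ : Measure G) [μ.IsAddHaarMeasure] (hμ : μ Set.univ = 1)
    (A B : Set G) (hA : MeasurableSet A) (hB : MeasurableSet B)
    (h : innerHaar μ (A + B) < μ A + μ B)
    (H : Set G) (hH : H = {t : G | μ ((t +ᵥ (A + B)) ∆ (A + B)) = 0}) :
    A - B = (A - B) + H := by
  set S := A + B with hS
  have h0H : (0 : G) ∈ H := by
    rw [hH]; simp [zero_vadd, symmDiff_self]; exact Filter.EventuallyEq.rfl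
  apply Set.Subset.antisymm
  · intro x hx
    exact ⟨x, hx, 0, h0H, add_zero x⟩
  · rintro z ⟨x, hx, t, ht, rfl⟩
    obtain ⟨a, ha, b, hb, rfl⟩ := hx
    rw [hH] at ht
    simp only [Set.mem_setOf_eq] at ht
    -- goal : a - b + t ∈ A - B
    by_contra hcon
    set N := toMeasurable μ ((t +ᵥ S) \ S) with hNdef
    have hN0 : μ N = 0 := by
      rw [measure_toMeasurable]
      exact measure_mono_null (fun y hy => Or.inl hy) ht
    have hNm : MeasurableSet N := measurableSet_toMeasurable μ _
    set C := ((a + t) +ᵥ B) \ N with hCdef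
    set D := b +ᵥ A with hDdef
    have hCm : MeasurableSet C := (hB.const_vadd (a + t)).diff hNm
    have hDm : MeasurableSet D := hA.const_vadd b
    have hCS : C ⊆ S := by
      rintro y ⟨hy1, hy2⟩
      obtain ⟨b', hb', rfl⟩ := hy1
      by_contra hyS
      exact hy2 (subset_toMeasurable μ _ ⟨⟨a + b', add_mem_add ha hb', by simp only [vadd_eq_add]; abel⟩, hyS⟩)
    have hDS : D ⊆ S := by
      rintro y ⟨a', ha', rfl⟩
      exact ⟨a', ha', b, hb, by simp only [vadd_eq_add]; abel⟩
    have hdisj : Disjoint C D := by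
      rw [Set.disjoint_left]
      rintro y ⟨hy1, _⟩ hy2
      obtain ⟨b', hb', rfl⟩ := hy1
      obtain ⟨a', ha', hab⟩ := hy2
      exact hcon ⟨a', ha', b', hb', by
        have : b + a' = a + t + b' := by simpa [vadd_eq_add] using hab
        have : a' = a + t + b' - b := by rw [← this]; abel
        rw [this]; beta_reduce; abel⟩
    have hμC : μ C = μ B := by
      rw [hCdef, measure_diff_null hN0, measure_vadd]
    have hμD : μ D = μ A := measure_vadd _ _ _
    have hsum : μ A + μ B = μ (C ∪ D) := by
      rw [measure_union hdisj hDm, hμC, hμD, add_comm]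
    have hinner : μ (C ∪ D) ≤ innerHaar μ S := by
      rw [(hCm.union hDm).measure_eq_iSup_isCompact]
      refine iSup₂_le fun K hK => iSup_le fun hKc => ?_
      exact le_iSup_of_le K (le_iSup_of_le (hK.trans (Set.union_subset hCS hDS))
        (le_iSup_of_le hKc le_rfl))
    exact absurd (lt_of_lt_of_le h (hsum.le.trans hinner)) (lt_irrefl _)
end

section
/- Let G be a compact abelian group with Haar measure m, and A, B ⊆ G measurable sets with m(A) > 0 and m(B) > 0. Then there exist measurable subsets A' ⊆ A and B' ⊆ B with m(A') = m(A) and m(B') = m(B), such that for every t ∈ G, if (A' − t) ∩ B' is nonempty then m((A' − t) ∩ B') > 0. -/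
open MeasureTheory Set Pointwise Filter Topology
open scoped ENNReal

set_option linter.unusedSectionVars false

section Helpers

variable {G : Type*} [AddCommGroup G] [TopologicalSpace G] [IsTopologicalAddGroup G]
    [CompactSpace G] [MeasurableSpace G] [BorelSpace G]
    {μ : Measure G} [μ.IsAddHaarMeasure]


/-- L¹-continuity of translation, one-sided version. -/
lemma tendsto_measure_vadd_sdiff (S : Set G) (hS : MeasurableSet S) :
    Tendsto (fun d : G => μ ((d +ᵥ S) \ S)) (𝓝 0) (𝓝 0) := by
  rw [ENNReal.tendsto_nhds_zero]
  intro ε hε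
  have hε2 : (0:ℝ≥0∞) < ε / 2 := ENNReal.half_pos hε.ne'
  obtain ⟨K, hKS, hKc, hKm⟩ : ∃ K ⊆ S, IsCompact K ∧ μ S < μ K + ε / 2 :=
    hS.exists_isCompact_lt_add (measure_ne_top μ S) hε2.ne'
  have hK'c : IsCompact (closure K) := hKc.closure
  have hK'S : closure K ⊆ S := hKc.closure_subset_measurableSet hS hKS
  have hK'm : μ S < μ (closure K) + ε / 2 :=
    lt_of_lt_of_le hKm (add_le_add_left (measure_mono subset_closure) _)
  have hSK' : μ (S \ closure K) < ε / 2 :=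
    measure_diff_lt_of_lt_add isClosed_closure.measurableSet.nullMeasurableSet hK'S
      (measure_ne_top μ _) hK'm
  have h1 : Tendsto (fun d : G => μ ((d +ᵥ closure K) \ closure K)) (𝓝 0) (𝓝 0) :=
    tendsto_measure_vadd_sdiff_isCompact_isClosed hK'c isClosed_closure
  have h2 := (ENNReal.tendsto_nhds_zero.1 h1) (ε/2) hε2
  filter_upwards [h2] with d hd
  have hsub : (d +ᵥ S) \ S ⊆ (d +ᵥ (S \ closure K)) ∪ ((d +ᵥ closure K) \ closure K) := by
    intro x hx
    by_cases hxK : x ∈ d +ᵥ closure K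
    · exact Or.inr ⟨hxK, fun hxK' => hx.2 (hK'S hxK')⟩
    · rw [Set.vadd_set_sdiff]
      exact Or.inl ⟨hx.1, hxK⟩
  calc μ ((d +ᵥ S) \ S) ≤ μ (d +ᵥ (S \ closure K)) + μ ((d +ᵥ closure K) \ closure K) :=
        (measure_mono hsub).trans (measure_union_le _ _)
    _ ≤ ε / 2 + ε / 2 := add_le_add (by rw [measure_vadd]; exact hSK'.le) hd
    _ = ε := ENNReal.add_halves ε

/-- L¹-continuity of translation, other side. -/
lemma tendsto_measure_sdiff_vadd (S : Set G) (hS : MeasurableSet S) :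
    Tendsto (fun d : G => μ (S \ (d +ᵥ S))) (𝓝 0) (𝓝 0) := by
  have hneg : Tendsto (fun d : G => -d) (𝓝 0) (𝓝 0) := by
    simpa using (continuous_neg : Continuous (fun x : G => -x)).tendsto 0
  have h := (tendsto_measure_vadd_sdiff (μ := μ) S hS).comp hneg
  have heq : ∀ d : G, μ ((-d +ᵥ S) \ S) = μ (S \ (d +ᵥ S)) := by
    intro d
    have : S \ (d +ᵥ S) = d +ᵥ ((-d +ᵥ S) \ S) := by
      rw [Set.vadd_set_sdiff, vadd_vadd, add_neg_cancel, zero_vadd]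
    rw [this, measure_vadd]
  exact h.congr heq


/-- Continuity of `a ↦ μ (S ∩ ((-a) +ᵥ Q))`. -/
lemma continuous_measure_inter_vadd (S Q : Set G) (hQ : MeasurableSet Q) :
    Continuous (fun a : G => μ (S ∩ ((-a) +ᵥ Q))) := by
  set f : G → ℝ≥0∞ := fun a => μ (S ∩ ((-a) +ᵥ Q)) with hf
  rw [continuous_iff_continuousAt]
  intro b
  have hfb : f b ≠ ⊤ := measure_ne_top μ _
  rw [ContinuousAt, ENNReal.tendsto_nhds hfb]
  intro ε hε
  have key : ∀ a c : G, f a ≤ f c + μ (((c - a) +ᵥ Q) \ Q) := by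
    intro a c
    have hsub : S ∩ ((-a) +ᵥ Q) ⊆ (S ∩ ((-c) +ᵥ Q)) ∪ (((-a) +ᵥ Q) \ ((-c) +ᵥ Q)) := by
      intro x hx
      by_cases hxc : x ∈ (-c) +ᵥ Q
      · exact Or.inl ⟨hx.1, hxc⟩
      · exact Or.inr ⟨hx.2, hxc⟩
    have hmeq : μ (((-a) +ᵥ Q) \ ((-c) +ᵥ Q)) = μ (((c - a) +ᵥ Q) \ Q) := by
      have : c +ᵥ (((-a) +ᵥ Q) \ ((-c) +ᵥ Q)) = ((c - a) +ᵥ Q) \ Q := by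
        rw [Set.vadd_set_sdiff, vadd_vadd, vadd_vadd, add_neg_cancel, zero_vadd, sub_eq_add_neg]
      rw [← this, measure_vadd]
    calc f a ≤ μ (S ∩ ((-c) +ᵥ Q)) + μ (((-a) +ᵥ Q) \ ((-c) +ᵥ Q)) :=
          (measure_mono hsub).trans (measure_union_le _ _)
      _ = f c + μ (((c - a) +ᵥ Q) \ Q) := by rw [hmeq]
  have T := ENNReal.tendsto_nhds_zero.1 (tendsto_measure_vadd_sdiff (μ := μ) Q hQ) ε hε
  have t1 : Tendsto (fun a : G => b - a) (𝓝 b) (𝓝 0) := by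
    have : Continuous (fun a : G => b - a) := continuous_const.sub continuous_id
    simpa using this.tendsto b
  have t2 : Tendsto (fun a : G => a - b) (𝓝 b) (𝓝 0) := by
    have : Continuous (fun a : G => a - b) := continuous_id.sub continuous_const
    simpa using this.tendsto b
  filter_upwards [t1.eventually T, t2.eventually T] with a h1 h2
  constructor
  · rw [tsub_le_iff_right]
    calc f b ≤ f a + μ (((a - b) +ᵥ Q) \ Q) := key b a
      _ ≤ f a + ε := add_le_add_right h2 _
  · calc f a ≤ f b + μ (((b - a) +ᵥ Q) \ Q) := key a b
      _ ≤ f b + ε := add_le_add_right h1 _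

/-- Uniform continuity of a continuous real function on a compact group. -/
lemma unif_cont (k : G → ℝ) (hk : Continuous k) (ε : ℝ) (hε : 0 < ε) :
    ∃ W : Set G, IsOpen W ∧ (0:G) ∈ W ∧
      ∀ d ∈ W, ∀ z : G, |k (z + d) - k z| ≤ ε := by
  set Ω : Set (G × G) := {p | |k (p.2 + p.1) - k p.2| < ε} with hΩ
  have hΩopen : IsOpen Ω := by
    have c1 : Continuous (fun p : G × G => |k (p.2 + p.1) - k p.2|) :=
      ((hk.comp (continuous_snd.add continuous_fst)).sub (hk.comp continuous_snd)).abs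
    exact isOpen_lt c1 continuous_const
  have hmem : ∀ z : G, ((0:G), z) ∈ Ω := by
    intro z
    simp only [hΩ, Set.mem_setOf_eq, add_zero, sub_self, abs_zero]
    exact hε
  have hyp : ∀ z : G, ∃ (U V : Set G), IsOpen U ∧ (0:G) ∈ U ∧ V ∈ 𝓝 z ∧ U ×ˢ V ⊆ Ω := by
    intro z
    have : Ω ∈ 𝓝 ((0:G), z) := hΩopen.mem_nhds (hmem z)
    rw [mem_nhds_prod_iff] at this
    obtain ⟨U, hU, V, hV, hUV⟩ := this
    obtain ⟨U', hU'sub, hU'open, hU'mem⟩ := mem_nhds_iff.1 hU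
    exact ⟨U', V, hU'open, hU'mem, hV, (Set.prod_mono hU'sub subset_rfl).trans hUV⟩
  choose U V hUopen hU0 hVnhds hUV using hyp
  obtain ⟨t, ht⟩ := isCompact_univ.elim_nhds_subcover V (fun z _ => hVnhds z)
  refine ⟨⋂ z ∈ t, U z, isOpen_biInter_finset (fun z _ => hUopen z),
    Set.mem_biInter (fun z _ => hU0 z), ?_⟩
  intro d hd z
  have hz : z ∈ ⋃ x ∈ t, V x := ht.2 (Set.mem_univ z)
  obtain ⟨x, hxt, hzx⟩ := Set.mem_iUnion₂.1 hz
  have hmem2 : (d, z) ∈ Ω := hUV x ⟨Set.mem_iInter₂.1 hd x hxt, hzx⟩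
  exact hmem2.le

/-- A countable measurable partition of `G` subordinate to translates of `W`. -/
lemma partition_exists (W : Set G) (hW : IsOpen W) (h0 : (0:G) ∈ W) :
    ∃ (t : ℕ → G) (E : ℕ → Set G), (∀ n, MeasurableSet (E n)) ∧
      Pairwise (Function.onFun Disjoint E) ∧ (⋃ n, E n) = Set.univ ∧
      ∀ n, E n ⊆ t n +ᵥ W := by
  have hcov : ∀ x : G, x ∈ Set.univ → x +ᵥ W ∈ 𝓝 x := by
    intro x _
    exact (hW.vadd x).mem_nhds ⟨0, h0, add_zero x⟩
  obtain ⟨s, hs⟩ := isCompact_univ.elim_nhds_subcover (fun x => x +ᵥ W) hcov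
  set l := s.toList with hl
  set t : ℕ → G := fun n => l.getD n 0 with ht
  set E : ℕ → Set G := disjointed (fun n => t n +ᵥ W) with hE
  have hunion : (⋃ n, t n +ᵥ W) = Set.univ := by
    apply Set.eq_univ_of_univ_subset
    intro x hx
    have := hs.2 (Set.mem_univ x)
    obtain ⟨y, hyt, hyx⟩ := Set.mem_iUnion₂.1 this
    have hyl : y ∈ l := Finset.mem_toList.2 hyt
    obtain ⟨n, hn, rfl⟩ := List.getElem_of_mem hyl
    refine Set.mem_iUnion.2 ⟨n, ?_⟩
    have : t n = l[n] := by simp [ht, List.getD_eq_getElem, hn]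
    rwa [this]
  refine ⟨t, E, fun n => MeasurableSet.disjointed (fun m => ((hW.vadd _).measurableSet)) n,
    disjoint_disjointed _, ?_, fun n => disjointed_subset _ n⟩
  rw [hE, iUnion_disjointed, hunion]



/-- The key iterated-integral swap for a continuous kernel. -/
lemma cont_swap (hμ : μ Set.univ = 1) (f g : G → ℝ≥0∞) (hf : Measurable f) (hg : Measurable g)
    (hf1 : ∀ x, f x ≤ 1) (hg1 : ∀ x, g x ≤ 1)
    (k : G → ℝ) (hk : Continuous k) (hk1 : ∀ x, k x ≤ 1) :
    ∫⁻ a, f a * ∫⁻ u, g u * ENNReal.ofReal (k (a + u)) ∂μ ∂μ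
      = ∫⁻ u, g u * ∫⁻ a, f a * ENNReal.ofReal (k (a + u)) ∂μ ∂μ := by
  set φ : G → ℝ≥0∞ := fun x => ENNReal.ofReal (k x) with hφdef
  have hφm : Measurable φ := ENNReal.measurable_ofReal.comp hk.measurable
  have hφ1 : ∀ x, φ x ≤ 1 := by
    intro x
    simpa [hφdef] using ENNReal.ofReal_le_one.2 (hk1 x)
  set I : G → ℝ≥0∞ := fun a => ∫⁻ u, g u * φ (a + u) ∂μ with hI
  set J : G → ℝ≥0∞ := fun u => ∫⁻ a, f a * φ (a + u) ∂μ with hJ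
  have hintf : ∫⁻ a, f a ∂μ ≤ 1 := by
    calc ∫⁻ a, f a ∂μ ≤ ∫⁻ _, 1 ∂μ := lintegral_mono hf1
      _ = 1 := by simp [hμ]
  have hintg : ∫⁻ u, g u ∂μ ≤ 1 := by
    calc ∫⁻ u, g u ∂μ ≤ ∫⁻ _, 1 ∂μ := lintegral_mono hg1
      _ = 1 := by simp [hμ]
  have hJ1 : ∀ u, J u ≤ 1 := by
    intro u
    calc J u ≤ ∫⁻ a, f a ∂μ := lintegral_mono fun a => by
          calc f a * φ (a + u) ≤ f a * 1 := mul_le_mul_right (hφ1 _) _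
            _ = f a := mul_one _
      _ ≤ 1 := hintf
  have hRHS1 : ∫⁻ u, g u * J u ∂μ ≤ 1 := by
    calc ∫⁻ u, g u * J u ∂μ ≤ ∫⁻ u, g u ∂μ := lintegral_mono fun u => by
          calc g u * J u ≤ g u * 1 := mul_le_mul_right (hJ1 _) _
            _ = g u := mul_one _
      _ ≤ 1 := hintg
  -- the key two-sided estimate
  have key : ∀ ε : ℝ, 0 < ε →
      (∫⁻ a, f a * I a ∂μ ≤ (∫⁻ u, g u * J u ∂μ) + ENNReal.ofReal ε ∧
       ∫⁻ u, g u * J u ∂μ ≤ (∫⁻ a, f a * I a ∂μ) + ENNReal.ofReal ε) := by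
    intro ε hε
    set e : ℝ≥0∞ := ENNReal.ofReal (ε / 2) with he
    obtain ⟨W, hWo, hW0, hWuc⟩ := unif_cont k hk (ε / 2) (by positivity)
    obtain ⟨t, E, hEm, hEd, hEu, hEsub⟩ := partition_exists W hWo hW0
    -- pointwise uniform continuity in ℝ≥0∞ form
    have hφuc : ∀ n, ∀ a ∈ E n, ∀ u : G,
        φ (a + u) ≤ φ (t n + u) + e ∧ φ (t n + u) ≤ φ (a + u) + e := by
      intro n a ha u
      have hd : -t n + a ∈ W := Set.mem_vadd_set_iff_neg_vadd_mem.1 (hEsub n ha)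
      have h1 := hWuc _ hd (t n + u)
      have hz : t n + u + (-t n + a) = a + u := by abel
      rw [hz] at h1
      rw [abs_sub_le_iff] at h1
      constructor
      · calc φ (a + u) ≤ ENNReal.ofReal (k (t n + u) + ε / 2) :=
              ENNReal.ofReal_le_ofReal (by linarith [h1.1])
          _ ≤ φ (t n + u) + e := ENNReal.ofReal_add_le
      · calc φ (t n + u) ≤ ENNReal.ofReal (k (a + u) + ε / 2) :=
              ENNReal.ofReal_le_ofReal (by linarith [h1.2])
          _ ≤ φ (a + u) + e := ENNReal.ofReal_add_le
    set c : ℕ → ℝ≥0∞ := fun n => ∫⁻ u, g u * φ (t n + u) ∂μ with hc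
    set m : ℕ → ℝ≥0∞ := fun n => ∫⁻ a in E n, f a ∂μ with hm
    set S : ℝ≥0∞ := ∑' n, m n * c n with hS
    have hsplit : ∀ h : G → ℝ≥0∞, ∫⁻ x, h x ∂μ = ∑' n, ∫⁻ x in E n, h x ∂μ := by
      intro h
      rw [← lintegral_iUnion hEm hEd, hEu, Measure.restrict_univ]
    have hsum_m : ∑' n, m n = ∫⁻ a, f a ∂μ := (hsplit f).symm
    have hsum_m1 : ∑' n, m n ≤ 1 := hsum_m.le.trans hintf
    -- integrals of constants against g
    have hge : ∫⁻ u, g u * e ∂μ ≤ e := by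
      rw [lintegral_mul_const e hg]
      calc (∫⁻ u, g u ∂μ) * e ≤ 1 * e := mul_le_mul_left hintg e
        _ = e := one_mul e
    -- (a) LHS ≤ S + e
    have hIa : ∀ n, ∀ a ∈ E n, I a ≤ c n + e := by
      intro n a ha
      calc I a ≤ ∫⁻ u, g u * φ (t n + u) + g u * e ∂μ := lintegral_mono fun u => by
            calc g u * φ (a + u) ≤ g u * (φ (t n + u) + e) :=
                  mul_le_mul_right ((hφuc n a ha u).1) _
              _ = g u * φ (t n + u) + g u * e := mul_add _ _ _
        _ = c n + ∫⁻ u, g u * e ∂μ :=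
            lintegral_add_left (hg.mul (hφm.comp (measurable_const_add _))) _
        _ ≤ c n + e := add_le_add_right hge _
    have ha : ∫⁻ a, f a * I a ∂μ ≤ S + e := by
      rw [hsplit (fun a => f a * I a)]
      have hterm : ∀ n, ∫⁻ a in E n, f a * I a ∂μ ≤ m n * c n + e * m n := by
        intro n
        calc ∫⁻ a in E n, f a * I a ∂μ ≤ ∫⁻ a in E n, c n * f a + e * f a ∂μ := by
              apply lintegral_mono_ae
              rw [ae_restrict_iff' (hEm n)]
              filter_upwards with a haE
              calc f a * I a ≤ f a * (c n + e) := mul_le_mul_right (hIa n a haE) _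
                _ = c n * f a + e * f a := by ring
          _ = c n * m n + e * m n := by
              rw [lintegral_add_left (hf.const_mul _), lintegral_const_mul _ hf,
                lintegral_const_mul _ hf]
          _ = m n * c n + e * m n := by rw [mul_comm (c n) (m n)]
      calc ∑' n, ∫⁻ a in E n, f a * I a ∂μ ≤ ∑' n, (m n * c n + e * m n) :=
            ENNReal.tsum_le_tsum hterm
        _ = S + e * ∑' n, m n := by rw [ENNReal.tsum_add, ENNReal.tsum_mul_left]
        _ ≤ S + e * 1 := add_le_add_right (mul_le_mul_right hsum_m1 e) _
        _ = S + e := by rw [mul_one]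
    -- (b) S ≤ LHS + e
    have hcI : ∀ n, ∀ a ∈ E n, c n ≤ I a + e := by
      intro n a haE
      calc c n ≤ ∫⁻ u, g u * φ (a + u) + g u * e ∂μ := lintegral_mono fun u => by
            calc g u * φ (t n + u) ≤ g u * (φ (a + u) + e) :=
                  mul_le_mul_right ((hφuc n a haE u).2) _
              _ = g u * φ (a + u) + g u * e := mul_add _ _ _
        _ = I a + ∫⁻ u, g u * e ∂μ :=
            lintegral_add_left (hg.mul (hφm.comp (measurable_const_add _))) _
        _ ≤ I a + e := add_le_add_right hge _
    have hb : S ≤ (∫⁻ a, f a * I a ∂μ) + e := by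
      have hterm : ∀ n, m n * c n ≤ ∫⁻ a in E n, f a * I a ∂μ + e * m n := by
        intro n
        calc m n * c n = c n * m n := mul_comm _ _
          _ = ∫⁻ a in E n, c n * f a ∂μ := (lintegral_const_mul _ hf).symm
          _ ≤ ∫⁻ a in E n, f a * I a + e * f a ∂μ := by
              apply lintegral_mono_ae
              rw [ae_restrict_iff' (hEm n)]
              filter_upwards with a haE
              have h1 : c n * f a ≤ (I a + e) * f a := mul_le_mul_left (hcI n a haE) _
              have h2 : (I a + e) * f a = f a * I a + e * f a := by ring
              rw [← h2]
              exact h1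
          _ = (∫⁻ a in E n, f a * I a ∂μ) + e * m n := by
              rw [lintegral_add_right _ (hf.const_mul e), lintegral_const_mul _ hf]
      calc S ≤ ∑' n, (∫⁻ a in E n, f a * I a ∂μ + e * m n) := ENNReal.tsum_le_tsum hterm
        _ = (∑' n, ∫⁻ a in E n, f a * I a ∂μ) + e * ∑' n, m n := by
            rw [ENNReal.tsum_add, ENNReal.tsum_mul_left]
        _ ≤ (∫⁻ a, f a * I a ∂μ) + e := by
            rw [← hsplit (fun a => f a * I a)]
            exact add_le_add_right ((mul_le_mul_right hsum_m1 e).trans (by rw [mul_one])) _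
    -- P and its relation to S
    set P : G → ℝ≥0∞ := fun u => ∑' n, m n * φ (t n + u) with hP
    have hPm : Measurable P := by
      apply Measurable.ennreal_tsum
      intro n
      exact (hφm.comp (measurable_const_add _)).const_mul _
    have hgP : ∫⁻ u, g u * P u ∂μ = S := by
      have : ∀ u, g u * P u = ∑' n, m n * (g u * φ (t n + u)) := by
        intro u
        rw [hP, ENNReal.tsum_mul_left.symm]
        · congr 1
          funext n
          ring
      calc ∫⁻ u, g u * P u ∂μ = ∫⁻ u, ∑' n, m n * (g u * φ (t n + u)) ∂μ := by
            congr 1; funext u; exact this u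
        _ = ∑' n, ∫⁻ u, m n * (g u * φ (t n + u)) ∂μ :=
            lintegral_tsum fun n =>
              (((hg.mul (hφm.comp (measurable_const_add _))).const_mul _)).aemeasurable
        _ = ∑' n, m n * c n := by
            congr 1; funext n
            exact lintegral_const_mul _ (hg.mul (hφm.comp (measurable_const_add _)))
        _ = S := rfl
    -- pointwise relations between P and J
    have hJP : ∀ u, J u ≤ P u + e ∧ P u ≤ J u + e := by
      intro u
      have hJu : J u = ∑' n, ∫⁻ a in E n, f a * φ (a + u) ∂μ := hsplit _
      constructor
      · have hterm : ∀ n, ∫⁻ a in E n, f a * φ (a + u) ∂μ ≤ m n * φ (t n + u) + e * m n := by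
          intro n
          calc ∫⁻ a in E n, f a * φ (a + u) ∂μ
              ≤ ∫⁻ a in E n, φ (t n + u) * f a + e * f a ∂μ := by
                apply lintegral_mono_ae
                rw [ae_restrict_iff' (hEm n)]
                filter_upwards with a haE
                calc f a * φ (a + u) ≤ f a * (φ (t n + u) + e) :=
                      mul_le_mul_right ((hφuc n a haE u).1) _
                  _ = φ (t n + u) * f a + e * f a := by ring
            _ = φ (t n + u) * m n + e * m n := by
                rw [lintegral_add_left (hf.const_mul _), lintegral_const_mul _ hf,
                  lintegral_const_mul _ hf]
            _ = m n * φ (t n + u) + e * m n := by rw [mul_comm]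
        calc J u ≤ ∑' n, (m n * φ (t n + u) + e * m n) := by
              rw [hJu]; exact ENNReal.tsum_le_tsum hterm
          _ = P u + e * ∑' n, m n := by rw [ENNReal.tsum_add, ENNReal.tsum_mul_left]
          _ ≤ P u + e := add_le_add_right ((mul_le_mul_right hsum_m1 e).trans (by rw [mul_one])) _
      · have hterm : ∀ n, m n * φ (t n + u) ≤ ∫⁻ a in E n, f a * φ (a + u) ∂μ + e * m n := by
          intro n
          calc m n * φ (t n + u) = φ (t n + u) * m n := mul_comm _ _
            _ = ∫⁻ a in E n, φ (t n + u) * f a ∂μ := (lintegral_const_mul _ hf).symm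
            _ ≤ ∫⁻ a in E n, f a * φ (a + u) + e * f a ∂μ := by
                apply lintegral_mono_ae
                rw [ae_restrict_iff' (hEm n)]
                filter_upwards with a haE
                calc φ (t n + u) * f a ≤ (φ (a + u) + e) * f a :=
                      mul_le_mul_left ((hφuc n a haE u).2) _
                  _ = f a * φ (a + u) + e * f a := by ring
            _ = ∫⁻ a in E n, f a * φ (a + u) ∂μ + e * m n := by
                rw [lintegral_add_right _ (hf.const_mul e), lintegral_const_mul _ hf]
        calc P u ≤ ∑' n, (∫⁻ a in E n, f a * φ (a + u) ∂μ + e * m n) := ENNReal.tsum_le_tsum hterm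
          _ = J u + e * ∑' n, m n := by rw [ENNReal.tsum_add, ENNReal.tsum_mul_left, hJu]
          _ ≤ J u + e := add_le_add_right ((mul_le_mul_right hsum_m1 e).trans (by rw [mul_one])) _
    -- (c) RHS ≤ S + e ; (d) S ≤ RHS + e
    have hc' : ∫⁻ u, g u * J u ∂μ ≤ S + e := by
      calc ∫⁻ u, g u * J u ∂μ ≤ ∫⁻ u, g u * P u + g u * e ∂μ := lintegral_mono fun u => by
            calc g u * J u ≤ g u * (P u + e) := mul_le_mul_right (hJP u).1 _
              _ = g u * P u + g u * e := mul_add _ _ _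
        _ = (∫⁻ u, g u * P u ∂μ) + ∫⁻ u, g u * e ∂μ := lintegral_add_left (hg.mul hPm) _
        _ ≤ S + e := by rw [hgP]; exact add_le_add_right hge _
    have hd' : S ≤ (∫⁻ u, g u * J u ∂μ) + e := by
      calc S = ∫⁻ u, g u * P u ∂μ := hgP.symm
        _ ≤ ∫⁻ u, g u * J u + g u * e ∂μ := lintegral_mono fun u => by
            calc g u * P u ≤ g u * (J u + e) := mul_le_mul_right (hJP u).2 _
              _ = g u * J u + g u * e := mul_add _ _ _
        _ = (∫⁻ u, g u * J u ∂μ) + ∫⁻ u, g u * e ∂μ :=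
            lintegral_add_right _ (hg.mul_const e)
        _ ≤ (∫⁻ u, g u * J u ∂μ) + e := add_le_add_right hge _
    have hee : e + e = ENNReal.ofReal ε := by
      rw [he, ← ENNReal.ofReal_add (by positivity) (by positivity)]
      norm_num
    constructor
    · calc ∫⁻ a, f a * I a ∂μ ≤ S + e := ha
        _ ≤ ((∫⁻ u, g u * J u ∂μ) + e) + e := add_le_add_left hd' e
        _ = (∫⁻ u, g u * J u ∂μ) + ENNReal.ofReal ε := by rw [add_assoc, hee]
    · calc ∫⁻ u, g u * J u ∂μ ≤ S + e := hc'
        _ ≤ ((∫⁻ a, f a * I a ∂μ) + e) + e := add_le_add_left hb e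
        _ = (∫⁻ a, f a * I a ∂μ) + ENNReal.ofReal ε := by rw [add_assoc, hee]
  -- conclude
  apply le_antisymm
  · apply ENNReal.le_of_forall_pos_le_add
    intro ε' hε' _
    have := (key ε' hε').1
    rwa [ENNReal.ofReal_coe_nnreal] at this
  · apply ENNReal.le_of_forall_pos_le_add
    intro ε' hε' _
    have := (key ε' hε').2
    rwa [ENNReal.ofReal_coe_nnreal] at this



section SwapQ

/-- basic indicator integral identity -/
lemma inner_eq (T R : Set G) (hT : MeasurableSet T) (hR : MeasurableSet R) (b : G) :
    ∫⁻ x, T.indicator 1 x * R.indicator 1 (b + x) ∂μ = μ (T ∩ ((-b) +ᵥ R)) := by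
  have hset : MeasurableSet (T ∩ ((-b) +ᵥ R)) := hT.inter (hR.const_vadd _)
  have heq : (fun x => T.indicator 1 x * R.indicator 1 (b + x))
      = (T ∩ ((-b) +ᵥ R)).indicator (1 : G → ℝ≥0∞) := by
    funext x
    by_cases hxT : x ∈ T <;> by_cases hxR : b + x ∈ R <;>
      simp [Set.indicator_apply, hxT, hxR, Set.mem_vadd_set_iff_neg_vadd_mem, neg_neg]
  rw [heq, lintegral_indicator_one hset]

lemma lint_mul_indicator (C : Set G) (hC : MeasurableSet C) (h : G → ℝ≥0∞) :
    ∫⁻ a, C.indicator 1 a * h a ∂μ = ∫⁻ a in C, h a ∂μ := by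
  rw [← lintegral_indicator hC]
  congr 1
  funext a
  by_cases haC : a ∈ C <;> simp [Set.indicator_apply, haC]

variable (μ) in
/-- iterated integral with kernel `ψ` -/
noncomputable def Lfun (C S : Set G) (ψ : G → ℝ≥0∞) : ℝ≥0∞ :=
  ∫⁻ a, C.indicator 1 a * ∫⁻ u, S.indicator 1 u * ψ (a + u) ∂μ ∂μ

lemma Lfun_mono (C S : Set G) {ψ ψ' : G → ℝ≥0∞} (h : ∀ x, ψ x ≤ ψ' x) :
    Lfun μ C S ψ ≤ Lfun μ C S ψ' := by
  apply lintegral_mono fun a => mul_le_mul_right (lintegral_mono fun u =>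
    mul_le_mul_right (h _) _) _

lemma Lfun_indicator_le (hμ : μ Set.univ = 1) (C S : Set G) (hC : MeasurableSet C)
    (hS : MeasurableSet S) {K V : Set G} (hK : MeasurableSet K) (hV : MeasurableSet V)
    (hKV : K ⊆ V) :
    Lfun μ C S (V.indicator 1) ≤ Lfun μ C S (K.indicator 1) + μ (V \ K) := by
  set D := V \ K with hD
  have hDm : MeasurableSet D := hV.diff hK
  have hptwise : ∀ x, V.indicator (1 : G → ℝ≥0∞) x ≤ K.indicator 1 x + D.indicator 1 x := by
    intro x
    by_cases hxV : x ∈ V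
    · by_cases hxK : x ∈ K
      · simp [Set.indicator_apply, hxV, hxK]
      · simp [Set.indicator_apply, hD, hxV, hxK]
    · simp [Set.indicator_apply, hxV, fun h => hxV (hKV h), hD]
  have hinner : ∀ a, (∫⁻ u, S.indicator 1 u * V.indicator 1 (a + u) ∂μ)
      ≤ (∫⁻ u, S.indicator 1 u * K.indicator 1 (a + u) ∂μ) + μ (S ∩ ((-a) +ᵥ D)) := by
    intro a
    rw [← inner_eq S D hS hDm a]
    rw [← lintegral_add_left]
    · apply lintegral_mono fun u => by
        calc S.indicator 1 u * V.indicator 1 (a + u)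
            ≤ S.indicator 1 u * (K.indicator 1 (a + u) + D.indicator 1 (a + u)) :=
              mul_le_mul_right (hptwise _) _
          _ = S.indicator 1 u * K.indicator 1 (a + u) + S.indicator 1 u * D.indicator 1 (a + u) :=
              mul_add _ _ _
    · exact ((measurable_one.indicator hS).mul
        ((measurable_one.indicator hK).comp (measurable_const_add _)))
  calc Lfun μ C S (V.indicator 1)
      ≤ ∫⁻ a, (C.indicator 1 a * ∫⁻ u, S.indicator 1 u * K.indicator 1 (a + u) ∂μ)
          + C.indicator 1 a * μ (S ∩ ((-a) +ᵥ D)) ∂μ := by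
        apply lintegral_mono fun a => by
          calc C.indicator 1 a * ∫⁻ u, S.indicator 1 u * V.indicator 1 (a + u) ∂μ
              ≤ C.indicator 1 a * ((∫⁻ u, S.indicator 1 u * K.indicator 1 (a + u) ∂μ)
                  + μ (S ∩ ((-a) +ᵥ D))) := mul_le_mul_right (hinner a) _
            _ = _ := mul_add _ _ _
    _ = Lfun μ C S (K.indicator 1) + ∫⁻ a, C.indicator 1 a * μ (S ∩ ((-a) +ᵥ D)) ∂μ := by
        rw [lintegral_add_right _ (show Measurable (fun a => C.indicator 1 a * μ (S ∩ ((-a) +ᵥ D))) from (measurable_one.indicator hC).mul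
          (continuous_measure_inter_vadd (μ := μ) S D hDm).measurable)]
        rfl
    _ ≤ Lfun μ C S (K.indicator 1) + μ D := by
        apply add_le_add_right
        calc ∫⁻ a, C.indicator 1 a * μ (S ∩ ((-a) +ᵥ D)) ∂μ ≤ ∫⁻ _, μ D ∂μ := by
              apply lintegral_mono fun a => by
                have hCa : C.indicator (1 : G → ℝ≥0∞) a ≤ 1 := by
                  by_cases h : a ∈ C <;> simp [Set.indicator_apply, h]
                calc C.indicator 1 a * μ (S ∩ ((-a) +ᵥ D)) ≤ 1 * μ (S ∩ ((-a) +ᵥ D)) :=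
                      mul_le_mul_left hCa _
                  _ = μ (S ∩ ((-a) +ᵥ D)) := one_mul _
                  _ ≤ μ ((-a) +ᵥ D) := measure_mono Set.inter_subset_right
                  _ = μ D := measure_vadd μ _ _
          _ = μ D := by rw [lintegral_const, hμ, mul_one]

end SwapQ







lemma Lfun_le_one (hμ : μ Set.univ = 1) (C S : Set G) (ψ : G → ℝ≥0∞) (hψ : ∀ x, ψ x ≤ 1) :
    Lfun μ C S ψ ≤ 1 := by
  have hind : ∀ (T : Set G) (x : G), T.indicator (1 : G → ℝ≥0∞) x ≤ 1 := by
    intro T x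
    by_cases h : x ∈ T <;> simp [Set.indicator_apply, h]
  calc Lfun μ C S ψ ≤ ∫⁻ _, 1 ∂μ := by
        apply lintegral_mono fun a => ?_
        calc C.indicator 1 a * ∫⁻ u, S.indicator 1 u * ψ (a + u) ∂μ
            ≤ 1 * ∫⁻ u, (1:ℝ≥0∞) * 1 ∂μ := by
              apply mul_le_mul (hind C a) (lintegral_mono fun u =>
                mul_le_mul (hind S u) (hψ _) (zero_le) (zero_le)) (zero_le) (zero_le)
          _ = μ Set.univ := by simp
          _ = 1 := hμ
    _ = 1 := by simp [hμ]

/-- Swap of the two indicator slots for an indicator kernel. -/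
lemma swapQ (hμ : μ Set.univ = 1) (C S Q : Set G) (hC : MeasurableSet C)
    (hS : MeasurableSet S) (hQ : MeasurableSet Q) :
    Lfun μ C S (Q.indicator 1) = Lfun μ S C (Q.indicator 1) := by
  have hcont : ∀ (C' S' : Set G), MeasurableSet C' → MeasurableSet S' →
      ∀ ε : ℝ≥0∞, ε ≠ 0 →
      Lfun μ C' S' (Q.indicator 1) ≤ Lfun μ S' C' (Q.indicator 1) + 2 * ε := by
    intro C' S' hC' hS' ε hε
    have hε2 : (0:ℝ≥0∞) < ε / 2 := ENNReal.half_pos hε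
    -- inner compact
    obtain ⟨K, hKQ, hKc, hKm⟩ : ∃ K ⊆ Q, IsCompact K ∧ μ Q < μ K + ε / 2 :=
      hQ.exists_isCompact_lt_add (measure_ne_top μ Q) hε2.ne'
    have hK'c : IsCompact (closure K) := hKc.closure
    have hK'Q : closure K ⊆ Q := hKc.closure_subset_measurableSet hQ hKQ
    have hK'm : μ Q < μ (closure K) + ε / 2 :=
      lt_of_lt_of_le hKm (add_le_add_left (measure_mono subset_closure) _)
    have hQK' : μ (Q \ closure K) < ε / 2 :=
      measure_diff_lt_of_lt_add isClosed_closure.measurableSet.nullMeasurableSet hK'Q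
        (measure_ne_top μ _) hK'm
    -- outer open
    obtain ⟨V, hQV, hVo, hVm⟩ : ∃ V ⊇ Q, IsOpen V ∧ μ V < μ Q + ε / 2 :=
      Q.exists_isOpen_lt_of_lt _ (ENNReal.lt_add_right (measure_ne_top μ Q) hε2.ne')
    have hVQ : μ (V \ Q) < ε / 2 :=
      measure_diff_lt_of_lt_add hQ.nullMeasurableSet hQV (measure_ne_top μ Q) hVm
    have hK'V : closure K ⊆ V := hK'Q.trans hQV
    have hVK : μ (V \ closure K) ≤ ε := by
      calc μ (V \ closure K) ≤ μ ((V \ Q) ∪ (Q \ closure K)) := by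
            apply measure_mono
            intro x hx
            by_cases hxQ : x ∈ Q
            · exact Or.inr ⟨hxQ, hx.2⟩
            · exact Or.inl ⟨hx.1, hxQ⟩
        _ ≤ μ (V \ Q) + μ (Q \ closure K) := measure_union_le _ _
        _ ≤ ε / 2 + ε / 2 := add_le_add hVQ.le hQK'.le
        _ = ε := ENNReal.add_halves ε
    -- Urysohn function
    obtain ⟨k, hk1K, hk0V, _, hkIcc⟩ :=
      exists_continuous_one_zero_of_isCompact hK'c (isClosed_compl_iff.2 hVo)
        (disjoint_compl_right_iff_subset.2 hK'V)
    set ψ : G → ℝ≥0∞ := fun x => ENNReal.ofReal (k x) with hψdef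
    have hψK : ∀ x, (closure K).indicator (1 : G → ℝ≥0∞) x ≤ ψ x := by
      intro x
      by_cases hx : x ∈ closure K
      · simp only [Set.indicator_of_mem hx, Pi.one_apply, hψdef]
        rw [hk1K hx]
        norm_num
      · simp [Set.indicator_of_notMem hx]
    have hψV : ∀ x, ψ x ≤ V.indicator (1 : G → ℝ≥0∞) x := by
      intro x
      by_cases hx : x ∈ V
      · simp only [Set.indicator_of_mem hx, Pi.one_apply, hψdef]
        exact ENNReal.ofReal_le_one.2 (hkIcc x).2
      · have : k x = 0 := hk0V (by simpa using hx)
        simp [Set.indicator_of_notMem hx, hψdef, this]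
    have hQV' : ∀ x, Q.indicator (1 : G → ℝ≥0∞) x ≤ V.indicator 1 x := by
      intro x
      by_cases hx : x ∈ Q
      · simp [Set.indicator_of_mem hx, Set.indicator_of_mem (hQV hx)]
      · simp [Set.indicator_of_notMem hx]
    have hK'Q' : ∀ x, (closure K).indicator (1 : G → ℝ≥0∞) x ≤ Q.indicator 1 x := by
      intro x
      by_cases hx : x ∈ closure K
      · simp [Set.indicator_of_mem hx, Set.indicator_of_mem (hK'Q hx)]
      · simp [Set.indicator_of_notMem hx]
    have hswap : Lfun μ C' S' ψ = Lfun μ S' C' ψ := by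
      have h1 := cont_swap hμ (C'.indicator 1) (S'.indicator 1)
        (measurable_one.indicator hC') (measurable_one.indicator hS')
        (fun x => by by_cases h : x ∈ C' <;> simp [Set.indicator_apply, h])
        (fun x => by by_cases h : x ∈ S' <;> simp [Set.indicator_apply, h])
        k k.continuous (fun x => (hkIcc x).2)
      calc Lfun μ C' S' ψ
          = ∫⁻ a, C'.indicator 1 a * ∫⁻ u, S'.indicator 1 u * ENNReal.ofReal (k (a + u)) ∂μ ∂μ :=
            rfl
        _ = ∫⁻ u, S'.indicator 1 u * ∫⁻ a, C'.indicator 1 a * ENNReal.ofReal (k (a + u)) ∂μ ∂μ :=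
            h1
        _ = Lfun μ S' C' ψ := by
            unfold Lfun
            congr 1
            funext u
            congr 1
            congr 1
            funext a
            rw [add_comm]
    calc Lfun μ C' S' (Q.indicator 1)
        ≤ Lfun μ C' S' (V.indicator 1) := Lfun_mono _ _ hQV'
      _ ≤ Lfun μ C' S' ((closure K).indicator 1) + μ (V \ closure K) :=
          Lfun_indicator_le hμ C' S' hC' hS' isClosed_closure.measurableSet
            hVo.measurableSet hK'V
      _ ≤ Lfun μ C' S' ψ + ε := add_le_add (Lfun_mono _ _ hψK) hVK
      _ = Lfun μ S' C' ψ + ε := by rw [hswap]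
      _ ≤ Lfun μ S' C' (V.indicator 1) + ε := add_le_add_left (Lfun_mono _ _ hψV) _
      _ ≤ (Lfun μ S' C' ((closure K).indicator 1) + μ (V \ closure K)) + ε := by
          apply add_le_add_left
          exact Lfun_indicator_le hμ S' C' hS' hC' isClosed_closure.measurableSet
            hVo.measurableSet hK'V
      _ ≤ (Lfun μ S' C' (Q.indicator 1) + ε) + ε :=
          add_le_add_left (add_le_add (Lfun_mono _ _ hK'Q') hVK) _
      _ = Lfun μ S' C' (Q.indicator 1) + 2 * ε := by ring
  apply le_antisymm
  · apply ENNReal.le_of_forall_pos_le_add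
    intro ε' hε' _
    have h2 : ((ε' : ℝ≥0∞) / 2) ≠ 0 := by
      simp [ENNReal.div_eq_zero_iff, hε'.ne']
    have := hcont C S hC hS ((ε' : ℝ≥0∞) / 2) h2
    calc Lfun μ C S (Q.indicator 1) ≤ Lfun μ S C (Q.indicator 1) + 2 * ((ε' : ℝ≥0∞) / 2) := this
      _ = Lfun μ S C (Q.indicator 1) + ε' := by
          rw [ENNReal.mul_div_cancel' (by norm_num) (by norm_num)]
  · apply ENNReal.le_of_forall_pos_le_add
    intro ε' hε' _
    have h2 : ((ε' : ℝ≥0∞) / 2) ≠ 0 := by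
      simp [ENNReal.div_eq_zero_iff, hε'.ne']
    have := hcont S C hS hC ((ε' : ℝ≥0∞) / 2) h2
    calc Lfun μ S C (Q.indicator 1) ≤ Lfun μ C S (Q.indicator 1) + 2 * ((ε' : ℝ≥0∞) / 2) := this
      _ = Lfun μ C S (Q.indicator 1) + ε' := by
          rw [ENNReal.mul_div_cancel' (by norm_num) (by norm_num)]

/-- The Fubini-type swap in set form. -/
lemma swap_sets (hμ : μ Set.univ = 1) (C S Q : Set G) (hC : MeasurableSet C)
    (hS : MeasurableSet S) (hQ : MeasurableSet Q) :
    ∫⁻ a in C, μ (S ∩ ((-a) +ᵥ Q)) ∂μ = ∫⁻ u in S, μ (C ∩ ((-u) +ᵥ Q)) ∂μ := by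
  have h1 : Lfun μ C S (Q.indicator 1) = ∫⁻ a in C, μ (S ∩ ((-a) +ᵥ Q)) ∂μ := by
    rw [← lint_mul_indicator C hC]
    unfold Lfun
    congr 1
    funext a
    rw [inner_eq S Q hS hQ a]
  have h2 : Lfun μ S C (Q.indicator 1) = ∫⁻ u in S, μ (C ∩ ((-u) +ᵥ Q)) ∂μ := by
    rw [← lint_mul_indicator S hS]
    unfold Lfun
    congr 1
    funext u
    rw [inner_eq C Q hC hQ u]
  rw [← h1, ← h2, swapQ hμ C S Q hC hS hQ]





end Helpers

theorem full_measure_subsets_with_positive_intersections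
    {G : Type*} [AddCommGroup G] [TopologicalSpace G] [IsTopologicalAddGroup G]
    [CompactSpace G] [MeasurableSpace G] [BorelSpace G]
    (μ : Measure G) [μ.IsAddHaarMeasure] (hμ : μ Set.univ = 1)
    (A B : Set G) (hA : MeasurableSet A) (hB : MeasurableSet B)
    (hA0 : 0 < μ A) (hB0 : 0 < μ B) :
    ∃ A' B' : Set G, MeasurableSet A' ∧ MeasurableSet B' ∧ A' ⊆ A ∧ B' ⊆ B ∧
      μ A' = μ A ∧ μ B' = μ B ∧
      ∀ t : G, (((-t) +ᵥ A') ∩ B').Nonempty → 0 < μ (((-t) +ᵥ A') ∩ B') := by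
  set ε : ℕ → ℝ≥0∞ := fun n => (2⁻¹ : ℝ≥0∞) ^ n with hεdef
  have hεne : ∀ n, ε n ≠ 0 := fun n => pow_ne_zero n (by simp)
  -- choose good neighborhoods U n
  have hUex : ∀ n : ℕ, ∃ U : Set G, IsOpen U ∧ (0:G) ∈ U ∧
      (∀ u ∈ U, μ (A \ ((-u) +ᵥ A)) ≤ ε n * ε n) ∧
      (∀ u ∈ U, μ (B \ ((-u) +ᵥ B)) ≤ ε n * ε n) := by
    intro n
    have hη : (0:ℝ≥0∞) < ε n * ε n := by
      simp only [pos_iff_ne_zero]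
      exact mul_ne_zero (hεne n) (hεne n)
    have hneg : Tendsto (fun d : G => -d) (𝓝 0) (𝓝 0) := by
      simpa using (continuous_neg : Continuous (fun x : G => -x)).tendsto 0
    have hTA := (ENNReal.tendsto_nhds_zero.1
      ((tendsto_measure_sdiff_vadd (μ := μ) A hA).comp hneg)) _ hη
    have hTB := (ENNReal.tendsto_nhds_zero.1
      ((tendsto_measure_sdiff_vadd (μ := μ) B hB).comp hneg)) _ hη
    obtain ⟨U, hUsub, hUo, hU0⟩ := mem_nhds_iff.1 (hTA.and hTB)
    exact ⟨U, hUo, hU0, fun u hu => ((hUsub hu).1 : _),  fun u hu => ((hUsub hu).2 : _)⟩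
  choose U hUo hU0 hUA hUB using hUex
  have hUm : ∀ n, MeasurableSet (U n) := fun n => (hUo n).measurableSet
  have hUpos : ∀ n, 0 < μ (U n) := fun n => (hUo n).measure_pos μ ⟨0, hU0 n⟩
  have hUne : ∀ n, μ (U n) ≠ ⊤ := fun n => measure_ne_top μ _
  -- bad sets and their measure bounds
  have key : ∀ (S : Set G) (hS : MeasurableSet S),
      (∀ n, ∀ u ∈ U n, μ (S \ ((-u) +ᵥ S)) ≤ ε n * ε n) →
      ∀ n, μ ({a | ε n * μ (U n) ≤ μ (U n ∩ ((-a) +ᵥ Sᶜ))} ∩ S) ≤ ε n := by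
    intro S hS hUS n
    set F : G → ℝ≥0∞ := fun a => μ (U n ∩ ((-a) +ᵥ Sᶜ)) with hF
    have hFc : Continuous F := continuous_measure_inter_vadd (μ := μ) (U n) Sᶜ hS.compl
    have hFm : Measurable F := hFc.measurable
    have hintbound : ∫⁻ a in S, F a ∂μ ≤ (ε n * ε n) * μ (U n) := by
      rw [swap_sets hμ S (U n) Sᶜ hS (hUm n) hS.compl]
      calc ∫⁻ u in U n, μ (S ∩ ((-u) +ᵥ Sᶜ)) ∂μ ≤ ∫⁻ _ in U n, ε n * ε n ∂μ := by
            apply lintegral_mono_ae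
            rw [ae_restrict_iff' (hUm n)]
            filter_upwards with u hu
            have : S ∩ ((-u) +ᵥ Sᶜ) = S \ ((-u) +ᵥ S) := by
              rw [Set.vadd_set_compl, Set.diff_eq]
            rw [this]
            exact hUS n u hu
        _ = (ε n * ε n) * μ (U n) := by rw [setLIntegral_const]
    have hmarkov := mul_meas_ge_le_lintegral₀ (μ := μ.restrict S)
      hFm.aemeasurable (ε n * μ (U n))
    rw [Measure.restrict_apply (measurableSet_le measurable_const hFm)] at hmarkov
    have hchain : (ε n * μ (U n)) * μ ({a | ε n * μ (U n) ≤ F a} ∩ S)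
        ≤ (ε n * μ (U n)) * ε n := by
      calc (ε n * μ (U n)) * μ ({a | ε n * μ (U n) ≤ F a} ∩ S) ≤ ∫⁻ a in S, F a ∂μ := hmarkov
        _ ≤ (ε n * ε n) * μ (U n) := hintbound
        _ = (ε n * μ (U n)) * ε n := by ring
    have hne0 : ε n * μ (U n) ≠ 0 := mul_ne_zero (hεne n) (hUpos n).ne'
    have hneT : ε n * μ (U n) ≠ ⊤ := by
      apply ENNReal.mul_ne_top _ (hUne n)
      exact ENNReal.pow_ne_top (by simp)
    exact (ENNReal.mul_le_mul_iff_right hne0 hneT).1 hchain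
  set badA : ℕ → Set G := fun n => {a | ε n * μ (U n) ≤ μ (U n ∩ ((-a) +ᵥ Aᶜ))} ∩ A with hbadAdef
  set badB : ℕ → Set G := fun n => {a | ε n * μ (U n) ≤ μ (U n ∩ ((-a) +ᵥ Bᶜ))} ∩ B with hbadBdef
  have hbadA : ∀ n, μ (badA n) ≤ ε n := key A hA hUA
  have hbadB : ∀ n, μ (badB n) ≤ ε n := key B hB hUB
  have hbadAm : ∀ n, MeasurableSet (badA n) := by
    intro n
    exact (measurableSet_le measurable_const
      (continuous_measure_inter_vadd (μ := μ) (U n) Aᶜ hA.compl).measurable).inter hA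
  have hbadBm : ∀ n, MeasurableSet (badB n) := by
    intro n
    exact (measurableSet_le measurable_const
      (continuous_measure_inter_vadd (μ := μ) (U n) Bᶜ hB.compl).measurable).inter hB
  -- Borel-Cantelli
  have hsum : ∑' n, ε n ≠ ⊤ := by
    simp only [hεdef]
    simp [ENNReal.tsum_geometric, ENNReal.one_sub_inv_two, inv_inv]
  have hNA : μ (limsup badA atTop) = 0 :=
    measure_limsup_atTop_eq_zero (by
      exact ne_top_of_le_ne_top hsum (ENNReal.tsum_le_tsum hbadA))
  have hNB : μ (limsup badB atTop) = 0 :=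
    measure_limsup_atTop_eq_zero (by
      exact ne_top_of_le_ne_top hsum (ENNReal.tsum_le_tsum hbadB))
  set NA := limsup badA atTop with hNAdef
  set NB := limsup badB atTop with hNBdef
  have hNAm : MeasurableSet NA := by
    rw [hNAdef, limsup_eq_iInf_iSup_of_nat]
    exact MeasurableSet.iInter fun n =>
      MeasurableSet.iUnion fun m => MeasurableSet.iUnion fun _ => hbadAm _
  have hNBm : MeasurableSet NB := by
    rw [hNBdef, limsup_eq_iInf_iSup_of_nat]
    exact MeasurableSet.iInter fun n =>
      MeasurableSet.iUnion fun m => MeasurableSet.iUnion fun _ => hbadBm _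
  refine ⟨A \ NA, B \ NB, hA.diff hNAm, hB.diff hNBm, Set.diff_subset, Set.diff_subset,
    measure_diff_null hNA, measure_diff_null hNB, ?_⟩
  rintro t ⟨x, hx1, hx2⟩
  have ha' : t + x ∈ A \ NA := by
    have := Set.mem_vadd_set_iff_neg_vadd_mem.1 hx1
    simpa using this
  have hb' : x ∈ B \ NB := hx2
  set a := t + x with hadef
  set b := x with hbdef
  have hab : -t + a = b := by simp [hadef, hbdef]
  -- eventual good indices
  have evA : ∀ᶠ n in atTop, a ∉ badA n := by
    rw [← Filter.not_frequently]
    intro hf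
    exact ha'.2 (mem_limsup_iff_frequently_mem.2 hf)
  have evB : ∀ᶠ n in atTop, b ∉ badB n := by
    rw [← Filter.not_frequently]
    intro hf
    exact hb'.2 (mem_limsup_iff_frequently_mem.2 hf)
  obtain ⟨n, hnA, hnB, hn2⟩ := (evA.and (evB.and (eventually_ge_atTop 2))).exists
  -- translate the bad-set bounds
  have hFa : μ ((a +ᵥ U n) ∩ Aᶜ) < ε n * μ (U n) := by
    have h1 : ¬ (ε n * μ (U n) ≤ μ (U n ∩ ((-a) +ᵥ Aᶜ))) := by
      intro hle
      exact hnA ⟨hle, ha'.1⟩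
    push_neg at h1
    have heq : (a +ᵥ U n) ∩ Aᶜ = a +ᵥ (U n ∩ ((-a) +ᵥ Aᶜ)) := by
      rw [Set.vadd_set_inter, vadd_vadd, add_neg_cancel, zero_vadd]
    rw [heq, measure_vadd]
    exact h1
  have hFb : μ ((b +ᵥ U n) ∩ Bᶜ) < ε n * μ (U n) := by
    have h1 : ¬ (ε n * μ (U n) ≤ μ (U n ∩ ((-b) +ᵥ Bᶜ))) := by
      intro hle
      exact hnB ⟨hle, hb'.1⟩
    push_neg at h1
    have heq : (b +ᵥ U n) ∩ Bᶜ = b +ᵥ (U n ∩ ((-b) +ᵥ Bᶜ)) := by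
      rw [Set.vadd_set_inter, vadd_vadd, add_neg_cancel, zero_vadd]
    rw [heq, measure_vadd]
    exact h1
  -- positivity for the big sets
  have hABpos : 0 < μ (((-t) +ᵥ A) ∩ B) := by
    rw [pos_iff_ne_zero]
    intro h0
    set K := b +ᵥ U n with hKdef
    set X := (-t) +ᵥ (A ∩ (a +ᵥ U n)) with hXdef
    set Y := B ∩ (b +ᵥ U n) with hYdef
    have hXY : X ∩ Y ⊆ ((-t) +ᵥ A) ∩ B := by
      intro y hy
      constructor
      · obtain ⟨z, hz, rfl⟩ := hy.1
        exact ⟨z, hz.1, rfl⟩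
      · exact hy.2.1
    have hXYnull : μ (X ∩ Y) = 0 := measure_mono_null hXY h0
    have hKX : μ (K \ X) < ε n * μ (U n) := by
      have hKeq : K = (-t) +ᵥ (a +ᵥ U n) := by
        rw [vadd_vadd, hab]
      have : K \ X = (-t) +ᵥ ((a +ᵥ U n) ∩ Aᶜ) := by
        rw [hKeq, hXdef, ← Set.vadd_set_sdiff]
        congr 1
        ext y
        simp only [Set.mem_diff, Set.mem_inter_iff, Set.mem_compl_iff]
        tauto
      rw [this, measure_vadd]
      exact hFa
    have hKY : μ (K \ Y) < ε n * μ (U n) := by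
      have : K \ Y = (b +ᵥ U n) ∩ Bᶜ := by
        rw [hKdef, hYdef]
        ext y
        simp only [Set.mem_diff, Set.mem_inter_iff, Set.mem_compl_iff]
        tauto
      rw [this]
      exact hFb
    have hcover : K ⊆ (X ∩ Y) ∪ ((K \ X) ∪ (K \ Y)) := by
      intro y hy
      by_cases hyX : y ∈ X
      · by_cases hyY : y ∈ Y
        · exact Or.inl ⟨hyX, hyY⟩
        · exact Or.inr (Or.inr ⟨hy, hyY⟩)
      · exact Or.inr (Or.inl ⟨hy, hyX⟩)
    have hεsmall : ε n ≤ 4⁻¹ := by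
      calc ε n = (2⁻¹ : ℝ≥0∞) ^ n := rfl
        _ ≤ (2⁻¹ : ℝ≥0∞) ^ 2 := by
            apply pow_le_pow_of_le_one (zero_le) (by simp [ENNReal.inv_le_one]) hn2
        _ = 4⁻¹ := by
            rw [sq, ← ENNReal.mul_inv (by norm_num) (by norm_num)]
            norm_num
    have hcontr : μ (U n) < μ (U n) := by
      calc μ (U n) = μ K := (measure_vadd μ b (U n)).symm
        _ ≤ μ (X ∩ Y) + (μ (K \ X) + μ (K \ Y)) :=
            (measure_mono hcover).trans ((measure_union_le _ _).trans
              (add_le_add_right (measure_union_le _ _) _))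
        _ = μ (K \ X) + μ (K \ Y) := by rw [hXYnull, zero_add]
        _ ≤ ε n * μ (U n) + ε n * μ (U n) := add_le_add hKX.le hKY.le
        _ ≤ 4⁻¹ * μ (U n) + 4⁻¹ * μ (U n) :=
            add_le_add (mul_le_mul_left hεsmall _) (mul_le_mul_left hεsmall _)
        _ = 2⁻¹ * μ (U n) := by
            rw [← add_mul]
            congr 1
            rw [← two_mul, show (4:ℝ≥0∞) = 2 * 2 by norm_num,
              ENNReal.mul_inv (Or.inl two_ne_zero) (Or.inl ENNReal.ofNat_ne_top), ← mul_assoc,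
              ENNReal.mul_inv_cancel two_ne_zero ENNReal.ofNat_ne_top, one_mul]
        _ = μ (U n) / 2 := by rw [div_eq_mul_inv, mul_comm]
        _ < μ (U n) := ENNReal.half_lt_self (hUpos n).ne' (hUne n)
    exact lt_irrefl _ hcontr
  -- transfer to the primed sets
  have hsub : ((-t) +ᵥ A) ∩ B ⊆ ((((-t) +ᵥ (A \ NA)) ∩ (B \ NB)) ∪ ((-t) +ᵥ NA)) ∪ NB := by
    intro y hy
    obtain ⟨z, hz, rfl⟩ := hy.1
    by_cases hzNA : z ∈ NA
    · exact Or.inl (Or.inr ⟨z, hzNA, rfl⟩)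
    · by_cases hyNB : (-t) +ᵥ z ∈ NB
      · exact Or.inr hyNB
      · exact Or.inl (Or.inl ⟨⟨z, ⟨hz, hzNA⟩, rfl⟩, hy.2, hyNB⟩)
  have : μ (((-t) +ᵥ A) ∩ B) ≤ μ (((-t) +ᵥ (A \ NA)) ∩ (B \ NB)) := by
    calc μ (((-t) +ᵥ A) ∩ B)
        ≤ μ ((((-t) +ᵥ (A \ NA)) ∩ (B \ NB)) ∪ ((-t) +ᵥ NA)) + μ NB :=
          (measure_mono hsub).trans (measure_union_le _ _)
      _ ≤ (μ (((-t) +ᵥ (A \ NA)) ∩ (B \ NB)) + μ ((-t) +ᵥ NA)) + μ NB :=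
          add_le_add_left (measure_union_le _ _) _
      _ = μ (((-t) +ᵥ (A \ NA)) ∩ (B \ NB)) := by
          rw [measure_vadd, hNA, hNB, add_zero, add_zero]
  exact lt_of_lt_of_le hABpos this
end

section
/- Let G be a compact abelian group with Haar measure m, K ≤ G a compact open subgroup, and suppose A = A_1 ∪ A_0, B = B_1 ∪ B_0 is a decomposition satisfying: m((A_1+K) Δ A_1) = 0, m((B_1+K) Δ B_1) = 0, A_0 and B_0 are contained in cosets of K with (A_1+K) ∩ A_0 = (B_1+K) ∩ B_0 = ∅, A_0 + B_0 + K is a unique expression element of A + B + K in G/K, m_*(A_0+B_0) = m(A_0) + m(B_0), and m_*(A+B) = m(A) + m(B). Then m(A + B + K) = m(A + K) + m(B + K) − m(K). -/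
open MeasureTheory Set Pointwise
open scoped ENNReal symmDiff

section Helpers
set_option linter.unusedSectionVars false
variable {G : Type*} [AddCommGroup G]

lemma mem_vaddK {K : AddSubgroup G} {a x : G} :
    x ∈ a +ᵥ (K : Set G) ↔ x - a ∈ K := by
  constructor
  · rintro ⟨k, hk, rfl⟩
    simpa [vadd_eq_add] using hk
  · intro h
    exact ⟨x - a, h, by simp [vadd_eq_add]⟩

lemma mem_self_vadd (K : AddSubgroup G) (a : G) : a ∈ a +ᵥ (K : Set G) :=
  mem_vaddK.mpr (by simpa using K.zero_mem)

lemma coset_eq_coset {K : AddSubgroup G} {a b : G} (h : a ∈ b +ᵥ (K : Set G)) :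
    a +ᵥ (K : Set G) = b +ᵥ (K : Set G) := by
  rw [mem_vaddK] at h
  ext x
  rw [mem_vaddK, mem_vaddK]
  constructor
  · intro hx
    simpa [sub_add_sub_cancel] using K.add_mem hx h
  · intro hx
    simpa [sub_sub_sub_cancel_right] using K.sub_mem hx h

lemma subset_addK (K : AddSubgroup G) (S : Set G) : S ⊆ S + (K : Set G) :=
  fun x hx => Set.mem_add.mpr ⟨x, hx, 0, K.zero_mem, add_zero x⟩

variable [TopologicalSpace G] [IsTopologicalAddGroup G] [CompactSpace G]

lemma vadd_open (K : AddSubgroup G) (hKo : IsOpen (K : Set G)) (a : G) :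
    IsOpen (a +ᵥ (K : Set G)) := hKo.vadd a

lemma cover_lemma (K : AddSubgroup G) (hKo : IsOpen (K : Set G)) (T : Set G) :
    ∃ F : Finset G, ↑F ⊆ T ∧ T ⊆ ⋃ t ∈ F, t +ᵥ (K : Set G) := by
  classical
  have hsub : closure T ⊆ ⋃ t : T, (t : G) +ᵥ (K : Set G) := by
    intro x hx
    obtain ⟨t, hto, htT⟩ := mem_closure_iff.mp hx _ (vadd_open K hKo x) (mem_self_vadd K x)
    refine mem_iUnion.mpr ⟨⟨t, htT⟩, ?_⟩
    rw [mem_vaddK] at hto ⊢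
    simpa [neg_sub] using K.neg_mem hto
  obtain ⟨F, hF⟩ := (isClosed_closure.isCompact :
      IsCompact (closure T)).elim_finite_subcover
    (fun t : T => (t : G) +ᵥ (K : Set G)) (fun t => vadd_open K hKo t) hsub
  refine ⟨F.image Subtype.val, ?_, ?_⟩
  · intro x hx
    simp only [Finset.coe_image, Set.mem_image, Finset.mem_coe] at hx
    obtain ⟨t, _, rfl⟩ := hx
    exact t.2
  · intro x hx
    obtain ⟨i, hiF, hxi⟩ := Set.mem_iUnion₂.mp (hF (subset_closure hx))
    exact Set.mem_iUnion₂.mpr ⟨(i : G), Finset.mem_image_of_mem _ hiF, hxi⟩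

variable [MeasurableSpace G] [BorelSpace G]

lemma add_K_null (μ : Measure G) [μ.IsAddHaarMeasure] (K : AddSubgroup G)
    (hKo : IsOpen (K : Set G)) (S T : Set G)
    (hS : μ ((S + (K : Set G)) \ S) = 0) :
    μ ((S + T + (K : Set G)) \ (S + T)) = 0 := by
  obtain ⟨F, hFT, hTF⟩ := cover_lemma K hKo T
  have key : S + T + (K : Set G) ⊆ (S + T) ∪ ⋃ t ∈ F, t +ᵥ ((S + (K : Set G)) \ S) := by
    rintro x hx
    obtain ⟨y, hy, k, hk, rfl⟩ := Set.mem_add.mp hx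
    obtain ⟨s, hs, t, ht, rfl⟩ := Set.mem_add.mp hy
    obtain ⟨t', ht'F, ht'⟩ := Set.mem_iUnion₂.mp (hTF ht)
    rw [mem_vaddK] at ht'
    have hsk : s + (t - t') + k ∈ S + (K : Set G) :=
      Set.mem_add.mpr ⟨s, hs, (t - t') + k, K.add_mem ht' hk, by abel⟩
    by_cases hmem : s + (t - t') + k ∈ S
    · exact Or.inl (Set.mem_add.mpr ⟨s + (t - t') + k, hmem, t', hFT ht'F, by abel⟩)
    · refine Or.inr (Set.mem_iUnion₂.mpr ⟨t', ht'F, ?_⟩)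
      exact ⟨s + (t - t') + k, ⟨hsk, hmem⟩, by show t' + _ = _; abel⟩
  have hsub2 : (S + T + (K : Set G)) \ (S + T) ⊆ ⋃ t ∈ F, t +ᵥ ((S + (K : Set G)) \ S) := by
    rintro x ⟨hx1, hx2⟩
    rcases key hx1 with h | h
    · exact absurd h hx2
    · exact h
  refine measure_mono_null hsub2 (le_antisymm ?_ zero_le)
  refine le_trans (measure_biUnion_finset_le F _) ?_
  have hz : ∀ t ∈ F, μ (t +ᵥ ((S + (K : Set G)) \ S)) = 0 := by
    intro t _
    rw [measure_vadd]
    exact hS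
  rw [Finset.sum_congr rfl hz]
  simp

lemma le_innerHaar {G' : Type*} [MeasurableSpace G'] [TopologicalSpace G'] (μ : Measure G')
    {E S : Set G'} (hES : E ⊆ S) (hE : IsCompact E) : μ E ≤ innerHaar μ S :=
  le_iSup_of_le E (le_iSup_of_le hES (le_iSup_of_le hE le_rfl))

lemma innerHaar_exists {G' : Type*} [MeasurableSpace G'] [TopologicalSpace G'] (μ : Measure G')
    (S : Set G') (hfin : innerHaar μ S ≠ ⊤) {ε : ℝ≥0∞} (hε : ε ≠ 0) :
    ∃ E, E ⊆ S ∧ IsCompact E ∧ innerHaar μ S ≤ μ E + ε := by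
  by_cases h0 : innerHaar μ S = 0
  · exact ⟨∅, Set.empty_subset S, isCompact_empty, by simp [h0]⟩
  · have hlt : innerHaar μ S - ε < innerHaar μ S := ENNReal.sub_lt_self hfin h0 hε
    have hdef : innerHaar μ S = ⨆ (E : Set G') (_ : E ⊆ S) (_ : IsCompact E), μ E := rfl
    rw [hdef] at hlt
    obtain ⟨E, h1⟩ := lt_iSup_iff.mp hlt
    obtain ⟨hES, h2⟩ := lt_iSup_iff.mp h1
    obtain ⟨hEc, h3⟩ := lt_iSup_iff.mp h2
    exact ⟨E, hES, hEc, tsub_le_iff_right.mp h3.le⟩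

end Helpers

theorem QP_four
    {G : Type*} [AddCommGroup G] [TopologicalSpace G] [IsTopologicalAddGroup G]
    [CompactSpace G] [MeasurableSpace G] [BorelSpace G]
    (μ : Measure G) [μ.IsAddHaarMeasure] (hμ : μ Set.univ = 1)
    (K : AddSubgroup G) (hKc : IsCompact (K : Set G)) (hKo : IsOpen (K : Set G))
    (A B A1 A0 B1 B0 : Set G)
    (hmA : MeasurableSet A) (hmB : MeasurableSet B)
    (hmA0 : MeasurableSet A0) (hmB0 : MeasurableSet B0)
    (hAdec : A = A1 ∪ A0) (hBdec : B = B1 ∪ B0)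
    (hA1 : μ ((A1 + (K : Set G)) ∆ A1) = 0) (hB1 : μ ((B1 + (K : Set G)) ∆ B1) = 0)
    (hA0c : ∃ x : G, A0 ⊆ x +ᵥ (K : Set G)) (hB0c : ∃ x : G, B0 ⊆ x +ᵥ (K : Set G))
    (hA1A0 : (A1 + (K : Set G)) ∩ A0 = ∅) (hB1B0 : (B1 + (K : Set G)) ∩ B0 = ∅)
    (huee : ∃ a0 ∈ A, ∃ b0 ∈ B,
      A0 + B0 + (K : Set G) = (a0 + b0) +ᵥ (K : Set G) ∧
      ∀ a ∈ A, ∀ b ∈ B, (a + b) +ᵥ (K : Set G) = A0 + B0 + (K : Set G) →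
        a +ᵥ (K : Set G) = a0 +ᵥ (K : Set G) ∧ b +ᵥ (K : Set G) = b0 +ᵥ (K : Set G))
    (h0 : innerHaar μ (A0 + B0) = μ A0 + μ B0)
    (hsur : innerHaar μ (A + B) = μ A + μ B) :
    μ (A + B + (K : Set G)) = μ (A + (K : Set G)) + μ (B + (K : Set G)) - μ (K : Set G) := by
  classical
  have hfin : IsFiniteMeasure μ := ⟨by rw [hμ]; exact ENNReal.one_lt_top⟩
  obtain ⟨a0, ha0A, b0, hb0B, hco, huniq⟩ := huee
  -- nonemptiness of A0 and B0
  have hcosetne : (A0 + B0 + (K : Set G)).Nonempty := by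
    rw [hco]; exact ⟨a0 + b0, mem_self_vadd K _⟩
  obtain ⟨w, hw⟩ := hcosetne
  obtain ⟨y, hy, k, hk, rfl⟩ := Set.mem_add.mp hw
  obtain ⟨aa, haa, bb, hbb, rfl⟩ := Set.mem_add.mp hy
  have hA0A : A0 ⊆ A := by rw [hAdec]; exact Set.subset_union_right
  have hB0B : B0 ⊆ B := by rw [hBdec]; exact Set.subset_union_right
  have hA1A : A1 ⊆ A := by rw [hAdec]; exact Set.subset_union_left
  have hB1B : B1 ⊆ B := by rw [hBdec]; exact Set.subset_union_left
  -- cosets of A0 / B0 elements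
  have hAB0coset : ∀ a ∈ A0, ∀ b ∈ B0,
      a +ᵥ (K : Set G) = a0 +ᵥ (K : Set G) ∧ b +ᵥ (K : Set G) = b0 +ᵥ (K : Set G) := by
    intro a ha b hb
    have hmem : a + b ∈ A0 + B0 + (K : Set G) :=
      subset_addK K _ (Set.add_mem_add ha hb)
    rw [hco] at hmem
    exact huniq a (hA0A ha) b (hB0B hb) ((coset_eq_coset hmem).trans hco.symm)
  -- disjointness of P and the coset
  set P : Set G := (A1 + B + (K : Set G)) ∪ (A0 + B1 + (K : Set G)) with hPdef
  have hPopen : IsOpen P := (IsOpen.add_left hKo).union (IsOpen.add_left hKo)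
  have hdisj : ∀ x ∈ P, x ∉ (a0 + b0) +ᵥ (K : Set G) := by
    rintro x (hx | hx) hxc
    · obtain ⟨y, hy, k', hk', rfl⟩ := Set.mem_add.mp hx
      obtain ⟨a, ha, b, hb, rfl⟩ := Set.mem_add.mp hy
      have hxab : a + b + k' ∈ (a + b) +ᵥ (K : Set G) :=
        mem_vaddK.mpr (by simpa using hk')
      have heq : (a + b) +ᵥ (K : Set G) = A0 + B0 + (K : Set G) := by
        rw [hco, ← coset_eq_coset hxab, coset_eq_coset hxc]
      have ha0 := (huniq a (hA1A ha) b hb heq).1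
      have haaK : aa ∈ a +ᵥ (K : Set G) := by
        rw [ha0, ← (hAB0coset aa haa bb hbb).1]
        exact mem_self_vadd K aa
      rw [mem_vaddK] at haaK
      have : aa ∈ (A1 + (K : Set G)) ∩ A0 :=
        ⟨Set.mem_add.mpr ⟨a, ha, aa - a, haaK, by abel⟩, haa⟩
      rw [hA1A0] at this
      exact this
    · obtain ⟨y, hy, k', hk', rfl⟩ := Set.mem_add.mp hx
      obtain ⟨a, ha, b, hb, rfl⟩ := Set.mem_add.mp hy
      have hxab : a + b + k' ∈ (a + b) +ᵥ (K : Set G) :=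
        mem_vaddK.mpr (by simpa using hk')
      have heq : (a + b) +ᵥ (K : Set G) = A0 + B0 + (K : Set G) := by
        rw [hco, ← coset_eq_coset hxab, coset_eq_coset hxc]
      have hb0 := (huniq a (hA0A ha) b (hB1B hb) heq).2
      have hbbK : bb ∈ b +ᵥ (K : Set G) := by
        rw [hb0, ← (hAB0coset aa haa bb hbb).2]
        exact mem_self_vadd K bb
      rw [mem_vaddK] at hbbK
      have : bb ∈ (B1 + (K : Set G)) ∩ B0 :=
        ⟨Set.mem_add.mpr ⟨b, hb, bb - b, hbbK, by abel⟩, hbb⟩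
      rw [hB1B0] at this
      exact this
  -- decomposition of A + B and A + B + K
  have hAB : A + B = ((A1 + B) ∪ (A0 + B1)) ∪ (A0 + B0) := by
    ext x
    simp only [hAdec, hBdec, Set.union_add, Set.add_union, Set.mem_union]
    tauto
  have hABK : A + B + (K : Set G) = P ∪ ((a0 + b0) +ᵥ (K : Set G)) := by
    rw [hAB, Set.union_add, Set.union_add, hco, hPdef]
  -- null sets
  have hA1d : μ ((A1 + (K : Set G)) \ A1) = 0 :=
    measure_mono_null (by rw [symmDiff_def]; exact Set.subset_union_left) hA1
  have hB1d : μ ((B1 + (K : Set G)) \ B1) = 0 :=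
    measure_mono_null (by rw [symmDiff_def]; exact Set.subset_union_left) hB1
  have hnullP : μ (P \ (A + B)) = 0 := by
    have h1 : μ ((A1 + B + (K : Set G)) \ (A1 + B)) = 0 :=
      add_K_null μ K hKo A1 B hA1d
    have h2 : μ ((A0 + B1 + (K : Set G)) \ (A0 + B1)) = 0 := by
      have := add_K_null μ K hKo B1 A0 hB1d
      rwa [add_comm B1 A0] at this
    have hsub : P \ (A + B) ⊆
        ((A1 + B + (K : Set G)) \ (A1 + B)) ∪ ((A0 + B1 + (K : Set G)) \ (A0 + B1)) := by
      rintro x ⟨hxP, hxAB⟩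
      rcases hxP with h | h
      · exact Or.inl ⟨h, fun hc => hxAB (hAB ▸ Or.inl (Or.inl hc))⟩
      · exact Or.inr ⟨h, fun hc => hxAB (hAB ▸ Or.inl (Or.inr hc))⟩
    exact measure_mono_null hsub (measure_union_null h1 h2)
  -- measure of coset
  have hμcoset : ∀ c : G, μ (c +ᵥ (K : Set G)) = μ (K : Set G) := fun c => measure_vadd μ c _
  -- step: μ (A+B+K) = μ P + μ K
  have h15 : μ (A + B + (K : Set G)) = μ P + μ (K : Set G) := by
    rw [hABK, measure_union (Set.disjoint_left.mpr hdisj)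
      (vadd_open K hKo (a0 + b0)).measurableSet, hμcoset]
  -- upper bound μ A + μ B ≤ μ P + (μ A0 + μ B0)
  have h16 : μ A + μ B ≤ μ P + (μ A0 + μ B0) := by
    rw [← hsur, ← h0]
    refine iSup_le fun E => iSup_le fun hE => iSup_le fun hEc => ?_
    have hdiff : E \ P ⊆ A0 + B0 := by
      rintro x ⟨hxE, hxP⟩
      have := hE hxE
      rw [hAB] at this
      rcases this with (h | h) | h
      · exact absurd (Or.inl (subset_addK K _ h)) hxP
      · exact absurd (Or.inr (subset_addK K _ h)) hxP
      · exact h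
    calc μ E = μ (E ∩ P) + μ (E \ P) := (measure_inter_add_diff E hPopen.measurableSet).symm
      _ ≤ μ P + innerHaar μ (A0 + B0) := add_le_add
          (measure_mono Set.inter_subset_right)
          (le_innerHaar μ hdiff (hEc.diff hPopen))
  -- lower bound μ P + (μ A0 + μ B0) ≤ μ A + μ B
  have h17 : μ P + (μ A0 + μ B0) ≤ μ A + μ B := by
    rw [← hsur, ← h0]
    refine ENNReal.le_of_forall_pos_le_add fun ε hε _ => ?_
    set δ : ℝ≥0∞ := (ε : ℝ≥0∞) / 2 with hδdef
    have hδ : δ ≠ 0 := by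
      simp [hδdef, ENNReal.div_eq_zero_iff, hε.ne']
    have hδδ : δ + δ = (ε : ℝ≥0∞) := ENNReal.add_halves _
    obtain ⟨F, hFsub, hFc, hFle⟩ := innerHaar_exists μ (A0 + B0) (by
      rw [h0]; exact ENNReal.add_ne_top.mpr ⟨measure_ne_top μ _, measure_ne_top μ _⟩) hδ
    -- compact E inside (A+B) ∩ P with μ P ≤ μ E + δ
    have hZ : μ (toMeasurable μ (P \ (A + B))) = 0 := by
      rw [measure_toMeasurable]; exact hnullP
    set W : Set G := P \ toMeasurable μ (P \ (A + B)) with hWdef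
    have hWmeas : MeasurableSet W :=
      hPopen.measurableSet.diff (measurableSet_toMeasurable μ _)
    have hWP : W ⊆ P := Set.diff_subset
    have hWAB : W ⊆ A + B := by
      rintro x ⟨hxP, hxZ⟩
      by_contra hc
      exact hxZ (subset_toMeasurable μ _ ⟨hxP, hc⟩)
    have hμW : μ W = μ P := by
      refine le_antisymm (measure_mono hWP) ?_
      calc μ P ≤ μ (W ∪ toMeasurable μ (P \ (A + B))) := measure_mono (fun x hx => by
            by_cases h : x ∈ toMeasurable μ (P \ (A + B))
            · exact Or.inr h
            · exact Or.inl ⟨hx, h⟩)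
        _ ≤ μ W + μ (toMeasurable μ (P \ (A + B))) := measure_union_le _ _
        _ = μ W := by rw [hZ, add_zero]
    obtain ⟨E, hEW, hEc, hEle⟩ : ∃ E, E ⊆ W ∧ IsCompact E ∧ μ P ≤ μ E + δ := by
      by_cases hPδ : μ P ≤ δ
      · exact ⟨∅, Set.empty_subset _, isCompact_empty, le_trans hPδ (by simp)⟩
      · push_neg at hPδ
        have hr : μ P - δ < μ W := by
          rw [hμW]
          exact ENNReal.sub_lt_self (measure_ne_top μ _)
            (fun h => by simp [h] at hPδ) hδ
        obtain ⟨E, hEW, hEc, hlt⟩ := hWmeas.exists_lt_isCompact hr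
        exact ⟨E, hEW, hEc, tsub_le_iff_right.mp hlt.le⟩
    -- combine
    have hEF : μ E + μ F ≤ μ (E ∪ F) := by
      have hiad := measure_inter_add_diff (μ := μ) (E ∪ F) hPopen.measurableSet
      have h1 : μ E ≤ μ ((E ∪ F) ∩ P) :=
        measure_mono (fun x hx => ⟨Or.inl hx, hWP (hEW hx)⟩)
      have h2 : μ F ≤ μ ((E ∪ F) \ P) := by
        refine measure_mono (fun x hx => ⟨Or.inr hx, fun hxP => ?_⟩)
        have : x ∈ (a0 + b0) +ᵥ (K : Set G) := by
          rw [← hco]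
          exact subset_addK K _ (hFsub hx)
        exact hdisj x hxP this
      calc μ E + μ F ≤ μ ((E ∪ F) ∩ P) + μ ((E ∪ F) \ P) := add_le_add h1 h2
        _ = μ (E ∪ F) := hiad
    have hEFsub : E ∪ F ⊆ A + B := Set.union_subset (fun x hx => hWAB (hEW hx))
      (fun x hx => (Set.add_subset_add hA0A hB0B) (hFsub hx))
    calc μ P + innerHaar μ (A0 + B0) ≤ (μ E + δ) + (μ F + δ) := add_le_add hEle hFle
      _ = (μ E + μ F) + (δ + δ) := by ring
      _ ≤ innerHaar μ (A + B) + ε := by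
          rw [hδδ]
          exact add_le_add_left (le_trans hEF (le_innerHaar μ hEFsub (hEc.union hFc))) _
  have h18 : μ P + (μ A0 + μ B0) = μ A + μ B := le_antisymm h17 h16
  -- measures of A + K and B + K
  have hA1A0' : A1 ∩ A0 ⊆ ∅ := by
    rw [← hA1A0]
    exact Set.inter_subset_inter_left _ (subset_addK K A1)
  have hB1B0' : B1 ∩ B0 ⊆ ∅ := by
    rw [← hB1B0]
    exact Set.inter_subset_inter_left _ (subset_addK K B1)
  have hμA1K : μ (A1 + (K : Set G)) = μ A1 := by
    refine le_antisymm ?_ (measure_mono (subset_addK K A1))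
    calc μ (A1 + (K : Set G)) ≤ μ (A1 ∪ ((A1 + (K : Set G)) \ A1)) :=
          measure_mono (fun x hx => (em (x ∈ A1)).elim Or.inl (fun h => Or.inr ⟨hx, h⟩))
      _ ≤ μ A1 + μ ((A1 + (K : Set G)) \ A1) := measure_union_le _ _
      _ = μ A1 := by rw [hA1d, add_zero]
  have hμB1K : μ (B1 + (K : Set G)) = μ B1 := by
    refine le_antisymm ?_ (measure_mono (subset_addK K B1))
    calc μ (B1 + (K : Set G)) ≤ μ (B1 ∪ ((B1 + (K : Set G)) \ B1)) :=
          measure_mono (fun x hx => (em (x ∈ B1)).elim Or.inl (fun h => Or.inr ⟨hx, h⟩))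
      _ ≤ μ B1 + μ ((B1 + (K : Set G)) \ B1) := measure_union_le _ _
      _ = μ B1 := by rw [hB1d, add_zero]
  have hcosetof : ∀ (S0 : Set G) (x a : G), S0 ⊆ x +ᵥ (K : Set G) → a ∈ S0 →
      S0 + (K : Set G) = a +ᵥ (K : Set G) := by
    intro S0 x a hS0 ha
    apply Set.Subset.antisymm
    · rintro _ ⟨a', ha', k', hk', rfl⟩
      have h1 : a' + k' ∈ a' +ᵥ (K : Set G) := mem_vaddK.mpr (by simpa using hk')
      rw [coset_eq_coset (hS0 ha'), ← coset_eq_coset (hS0 ha)] at h1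
      exact h1
    · rintro _ ⟨k', hk', rfl⟩
      exact Set.mem_add.mpr ⟨a, ha, k', hk', rfl⟩
  have hμA0K : μ (A0 + (K : Set G)) = μ (K : Set G) := by
    obtain ⟨x, hx⟩ := hA0c
    rw [hcosetof A0 x aa hx haa, hμcoset]
  have hμB0K : μ (B0 + (K : Set G)) = μ (K : Set G) := by
    obtain ⟨x, hx⟩ := hB0c
    rw [hcosetof B0 x bb hx hbb, hμcoset]
  have hdisjA : Disjoint (A1 + (K : Set G)) (A0 + (K : Set G)) := by
    rw [Set.disjoint_left]
    rintro x ⟨a1, h1, k1, hk1, rfl⟩ ⟨a', h', k', hk', heq⟩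
    have hmem : a' ∈ (A1 + (K : Set G)) ∩ A0 := by
      refine ⟨Set.mem_add.mpr ⟨a1, h1, k1 - k', K.sub_mem hk1 hk', ?_⟩, h'⟩
      have heq' : a' + k' = a1 + k1 := heq
      have : a' = a1 + k1 - k' := by rw [← heq']; abel
      rw [this]; abel
    rw [hA1A0] at hmem
    exact hmem
  have hdisjB : Disjoint (B1 + (K : Set G)) (B0 + (K : Set G)) := by
    rw [Set.disjoint_left]
    rintro x ⟨b1, h1, k1, hk1, rfl⟩ ⟨b', h', k', hk', heq⟩
    have hmem : b' ∈ (B1 + (K : Set G)) ∩ B0 := by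
      refine ⟨Set.mem_add.mpr ⟨b1, h1, k1 - k', K.sub_mem hk1 hk', ?_⟩, h'⟩
      have heq' : b' + k' = b1 + k1 := heq
      have : b' = b1 + k1 - k' := by rw [← heq']; abel
      rw [this]; abel
    rw [hB1B0] at hmem
    exact hmem
  have hμAK : μ (A + (K : Set G)) = μ A1 + μ (K : Set G) := by
    rw [hAdec, Set.union_add, measure_union hdisjA (IsOpen.add_left hKo).measurableSet,
      hμA1K, hμA0K]
  have hμBK : μ (B + (K : Set G)) = μ B1 + μ (K : Set G) := by
    rw [hBdec, Set.union_add, measure_union hdisjB (IsOpen.add_left hKo).measurableSet,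
      hμB1K, hμB0K]
  -- μ A = μ A1 + μ A0 and similarly for B
  have hA1eq : A \ A0 = A1 := by rw [hAdec]; exact Set.union_diff_cancel_right hA1A0'
  have hB1eq : B \ B0 = B1 := by rw [hBdec]; exact Set.union_diff_cancel_right hB1B0'
  have hμA : μ A = μ A1 + μ A0 := by
    rw [← measure_inter_add_diff A hmA0, Set.inter_eq_self_of_subset_right hA0A, hA1eq,
      add_comm]
  have hμB : μ B = μ B1 + μ B0 := by
    rw [← measure_inter_add_diff B hmB0, Set.inter_eq_self_of_subset_right hB0B, hB1eq,
      add_comm]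
  -- cancel to get μ P = μ A1 + μ B1
  have hμP : μ P = μ A1 + μ B1 := by
    have h := h18
    rw [hμA, hμB, add_add_add_comm] at h
    have hne : μ A0 + μ B0 ≠ ⊤ :=
      ENNReal.add_ne_top.mpr ⟨measure_ne_top μ _, measure_ne_top μ _⟩
    exact WithTop.add_right_cancel hne h
  -- final arithmetic
  rw [h15, hμP, hμAK, hμBK, add_add_add_comm, ← add_assoc,
    ENNReal.add_sub_cancel_right (measure_ne_top μ _)]
end

section
/- Let G be a compact abelian group with Haar measure m, and suppose (A, B) is a pair of measurable sets such that for every ε > 0 there is a compact open subgroup K with 0 < m(K) < ε and a quasi-periodic decomposition of A with respect to K (A = A_1 ∪ A_0 with m((A_1+K) Δ A_1) = 0 and A_0 contained in a coset of K). Then A is essentially regular: m(A) = m(closure(A)) = m(interior(closure(A))). -/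
open MeasureTheory Set Pointwise
open scoped ENNReal symmDiff

theorem essentially_regular_of_small_quasi_periods
    {G : Type*} [AddCommGroup G] [TopologicalSpace G] [IsTopologicalAddGroup G]
    [CompactSpace G] [MeasurableSpace G] [BorelSpace G]
    (μ : Measure G) [μ.IsAddHaarMeasure] (hμ : μ Set.univ = 1)
    (A : Set G) (hAm : MeasurableSet A)
    (h : ∀ ε : ℝ≥0∞, 0 < ε → ∃ K : AddSubgroup G,
      IsCompact (K : Set G) ∧ IsOpen (K : Set G) ∧
      0 < μ (K : Set G) ∧ μ (K : Set G) < ε ∧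
      ∃ A1 A0 : Set G, A = A1 ∪ A0 ∧ μ ((A1 + (K : Set G)) ∆ A1) = 0 ∧
        ∃ x : G, A0 ⊆ x +ᵥ (K : Set G)) :
    μ A = μ (closure A) ∧ μ A = μ (interior (closure A)) := by
  have hfinA : μ A ≠ ⊤ := by
    refine ne_top_of_le_ne_top ?_ (measure_mono (subset_univ A))
    rw [hμ]; exact ENNReal.one_ne_top
  have key : ∀ ε : ℝ≥0∞, 0 < ε →
      μ (closure A) ≤ μ A + ε ∧ μ A ≤ μ (interior (closure A)) + ε := by
    intro ε hε
    obtain ⟨K, hKc, hKo, hKpos, hKε, A1, A0, hAdec, hquasi, x, hA0⟩ := h ε hε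
    -- basic facts
    have hA1A : A1 ⊆ A := hAdec ▸ subset_union_left
    have hA0A : A0 ⊆ A := hAdec ▸ subset_union_right
    have hA1W : A1 ⊆ A1 + (K : Set G) := by
      intro a ha; exact ⟨a, ha, 0, K.zero_mem, by simp⟩
    have hWnull : μ ((A1 + (K : Set G)) \ A1) = 0 := by
      refine measure_mono_null ?_ hquasi
      rw [Set.symmDiff_def]; exact subset_union_left
    have hA0K : A0 + (K : Set G) ⊆ x +ᵥ (K : Set G) := by
      rintro _ ⟨a, ha, k, hk, rfl⟩
      obtain ⟨k', hk', rfl⟩ := hA0 ha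
      exact ⟨k' + k, K.add_mem hk' hk, by simp [add_assoc]⟩
    have hμxK : μ (x +ᵥ (K : Set G)) = μ (K : Set G) := measure_vadd μ x _
    -- upper bound: closure A ⊆ A + K
    have hclsub : closure A ⊆ A + (K : Set G) := by
      intro y hy
      have hyK : y ∈ y +ᵥ (K : Set G) := ⟨0, K.zero_mem, by simp⟩
      have hnhds : y +ᵥ (K : Set G) ∈ nhds y := (hKo.vadd y).mem_nhds hyK
      obtain ⟨s, hs1, hs2⟩ := mem_closure_iff_nhds.1 hy _ hnhds
      obtain ⟨k, hk, rfl⟩ := hs1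
      exact ⟨y + k, hs2, -k, K.neg_mem hk, by simp⟩
    have hupper : μ (closure A) ≤ μ A + ε := by
      have h1 : μ (closure A) ≤ μ (A1 + (K : Set G)) + μ (A0 + (K : Set G)) := by
        refine le_trans (measure_mono hclsub) ?_
        rw [hAdec, Set.union_add]
        exact measure_union_le _ _
      have h2 : μ (A1 + (K : Set G)) ≤ μ A1 := by
        have : A1 + (K : Set G) ⊆ A1 ∪ ((A1 + (K : Set G)) \ A1) := by
          intro y hy
          by_cases hy1 : y ∈ A1
          · exact Or.inl hy1
          · exact Or.inr ⟨hy, hy1⟩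
        calc μ (A1 + (K : Set G)) ≤ μ A1 + μ ((A1 + (K : Set G)) \ A1) :=
              le_trans (measure_mono this) (measure_union_le _ _)
          _ = μ A1 := by rw [hWnull, add_zero]
      have h3 : μ (A0 + (K : Set G)) ≤ ε :=
        le_trans (measure_mono hA0K) (hμxK ▸ hKε.le)
      calc μ (closure A) ≤ μ (A1 + (K : Set G)) + μ (A0 + (K : Set G)) := h1
        _ ≤ μ A1 + ε := add_le_add h2 h3
        _ ≤ μ A + ε := add_le_add_left (measure_mono hA1A) ε
    -- lower bound: A1 + K ⊆ closure A1
    have hWcl : A1 + (K : Set G) ⊆ closure A1 := by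
      rintro _ ⟨a, ha, k, hk, rfl⟩
      rw [mem_closure_iff]
      intro V hVopen hyV
      have hsub : V ∩ (a +ᵥ (K : Set G)) ⊆ (A1 + (K : Set G)) \ A1 ∪ A1 := by
        intro z hz
        obtain ⟨k', hk', rfl⟩ := hz.2
        by_cases hz1 : a + k' ∈ A1
        · exact Or.inr hz1
        · exact Or.inl ⟨⟨a, ha, k', hk', rfl⟩, hz1⟩
      have hpos : 0 < μ (V ∩ (a +ᵥ (K : Set G))) := by
        refine (hVopen.inter (hKo.vadd a)).measure_pos μ ⟨a + k, hyV, k, hk, rfl⟩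
      by_contra hcon
      have hVA1 : V ∩ A1 = ∅ := not_nonempty_iff_eq_empty.1 hcon
      have : V ∩ (a +ᵥ (K : Set G)) ⊆ (A1 + (K : Set G)) \ A1 := by
        intro z hz
        rcases hsub hz with h' | h'
        · exact h'
        · exact absurd ⟨z, hz.1, h'⟩ hcon
      have := measure_mono_null this hWnull
      exact absurd this hpos.ne'
    have hWint : A1 + (K : Set G) ⊆ interior (closure A) := by
      refine interior_maximal ?_ (hKo.add_left)
      exact hWcl.trans (closure_mono hA1A)
    have hlower : μ A ≤ μ (interior (closure A)) + ε := by
      have h1 : μ A ≤ μ A1 + μ A0 := by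
        rw [hAdec]; exact measure_union_le _ _
      have h2 : μ A1 ≤ μ (interior (closure A)) :=
        measure_mono (hA1W.trans hWint)
      have h3 : μ A0 ≤ ε := le_trans (measure_mono hA0) (hμxK ▸ hKε.le)
      exact h1.trans (add_le_add h2 h3)
    exact ⟨hupper, hlower⟩
  have h1 : μ A = μ (closure A) := by
    refine le_antisymm (measure_mono subset_closure) ?_
    refine ENNReal.le_of_forall_pos_le_add fun δ hδ _ => ?_
    exact (key δ (by exact_mod_cast hδ)).1
  have h2 : μ A ≤ μ (interior (closure A)) := by
    refine ENNReal.le_of_forall_pos_le_add fun δ hδ _ => ?_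
    exact (key δ (by exact_mod_cast hδ)).2
  exact ⟨h1, le_antisymm h2 (le_trans (measure_mono interior_subset) h1.ge)⟩
end

section
/- Let G = Z_7 be the group of 7-adic integers with Haar measure m, let C ⊆ Z be the set defined by the self-similar equation C = ({0,1} + 7Z) ∪ (2 + 7C), and let A be the closure of C in Z_7. Then m(A) = 1/3 and m(A + A) = 2/3 = m(A) + m(A), i.e., (A, A) is a sur-critical pair in Z_7. -/
open MeasureTheory Set Pointwise
open Topology
open scoped ENNReal

instance : Fact (Nat.Prime 7) := ⟨by norm_num⟩

theorem padic_surcritical_example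
    [MeasurableSpace ℤ_[7]] [BorelSpace ℤ_[7]]
    (μ : Measure ℤ_[7]) [μ.IsAddHaarMeasure] (hμ : μ Set.univ = 1)
    (C : Set ℤ_[7]) (hCZ : C ⊆ Set.range (Int.cast : ℤ → ℤ_[7]))
    (hC : C = (({0, 1} : Set ℤ_[7]) + (fun n => 7 * n) '' Set.range (Int.cast : ℤ → ℤ_[7]))
        ∪ ((fun x => 2 + 7 * x) '' C))
    (A : Set ℤ_[7]) (hA : A = closure C) :
    μ A = 1 / 3 ∧ μ (A + A) = 2 / 3 ∧ μ (A + A) = μ A + μ A := by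
  classical
  haveI : IsProbabilityMeasure μ := ⟨hμ⟩
  have h7 : (7 : ℤ_[7]) ≠ 0 := by
    have : ((7 : ℕ) : ℤ_[7]) ≠ 0 := Nat.cast_ne_zero.mpr (by norm_num)
    simpa using this
  set m7 : ℤ_[7] → ℤ_[7] := fun x => 7 * x with hm7def
  have hm7inj : Function.Injective m7 := fun a b h => by
    exact mul_left_cancel₀ h7 h
  have hm7cont : Continuous m7 := continuous_const.mul continuous_id
  have hm7closed : IsClosedEmbedding m7 := hm7cont.isClosedEmbedding hm7inj
  have hm7me : MeasurableEmbedding m7 := hm7closed.measurableEmbedding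
  set B : Set ℤ_[7] := Set.range m7 with hBdef
  have hBmem : ∀ x : ℤ_[7], x ∈ B ↔ (7 : ℤ_[7]) ∣ x := by
    intro x
    constructor
    · rintro ⟨y, rfl⟩; exact ⟨y, rfl⟩
    · rintro ⟨y, rfl⟩; exact ⟨y, rfl⟩
  have hBopen : IsOpen B := by
    have hBeq : B = {x : ℤ_[7] | ‖x‖ < 1} := by
      ext x
      rw [hBmem x, mem_setOf_eq, PadicInt.norm_lt_one_iff_dvd]
      norm_num
    rw [hBeq]
    exact isOpen_lt continuous_norm continuous_const
  have hBms : MeasurableSet B := hBopen.measurableSet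
  -- the reduction map
  set φ : ℤ_[7] →+* ZMod 7 := PadicInt.toZMod with hφdef
  have hφB : ∀ x : ℤ_[7], x ∈ B ↔ φ x = 0 := by
    intro x
    rw [hBmem x]
    have : φ x = 0 ↔ x ∈ RingHom.ker φ := RingHom.mem_ker.symm
    rw [this, hφdef, PadicInt.ker_toZMod, PadicInt.maximalIdeal_eq_span_p,
      Ideal.mem_span_singleton]
    norm_num
  -- translation invariance for images
  have himg : ∀ (c : ℤ_[7]) (s : Set ℤ_[7]), μ ((c + ·) '' s) = μ s := by
    intro c s
    rw [Set.image_add_left]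
    exact measure_preimage_add μ (-c) s
  have hsing : ∀ (c : ℤ_[7]) (s : Set ℤ_[7]), ({c} : Set ℤ_[7]) + s = (c + ·) '' s := by
    intro c s; exact Set.singleton_add
  -- the φ-value on cosets
  have hφcoset : ∀ (c : ℤ_[7]) (s : Set ℤ_[7]), s ⊆ B → ∀ x ∈ ({c} : Set ℤ_[7]) + s, φ x = φ c := by
    intro c s hs x hx
    rw [hsing] at hx
    obtain ⟨b, hb, rfl⟩ := hx
    rw [map_add]
    have : φ b = 0 := (hφB b).mp (hs hb)
    rw [this, add_zero]
  -- measure of B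
  have hcover : (Set.univ : Set ℤ_[7]) = ⋃ k ∈ Finset.range 7, ((k : ℤ_[7]) + ·) '' B := by
    apply Set.eq_of_subset_of_subset _ (Set.subset_univ _)
    intro x _
    have hlt : PadicInt.zmodRepr x < 7 := PadicInt.zmodRepr_lt_p x
    refine Set.mem_biUnion (Finset.mem_range.mpr hlt) ?_
    refine ⟨x - (PadicInt.zmodRepr x : ℤ_[7]), ?_, by ring⟩
    have := PadicInt.sub_zmodRepr_mem x
    rw [PadicInt.maximalIdeal_eq_span_p, Ideal.mem_span_singleton] at this
    rw [hBmem]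
    exact_mod_cast this
  have hcosetms : ∀ c : ℤ_[7], MeasurableSet ((c + ·) '' B) := by
    intro c
    rw [Set.image_add_left]
    exact hBms.preimage (measurable_const_add _)
  have hφnat : ∀ k : ℕ, φ ((k : ℤ_[7])) = (k : ZMod 7) := by
    intro k; exact map_natCast φ k
  have hB7 : μ B = 1 / 7 := by
    have hdisj : (↑(Finset.range 7) : Set ℕ).PairwiseDisjoint
        (fun k : ℕ => ((k : ℤ_[7]) + ·) '' B) := by
      intro k hk l hl hkl
      simp only [Finset.coe_range, Set.mem_Iio] at hk hl
      apply Set.disjoint_left.mpr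
      intro x hxk hxl
      obtain ⟨b, hb, hbx⟩ := hxk
      obtain ⟨c, hc, hcx⟩ := hxl
      have h1 : φ x = (k : ZMod 7) := by
        rw [← hbx, map_add, (hφB b).mp hb, add_zero]; exact hφnat k
      have h2 : φ x = (l : ZMod 7) := by
        rw [← hcx, map_add, (hφB c).mp hc, add_zero]; exact hφnat l
      have : (k : ZMod 7) = (l : ZMod 7) := h1 ▸ h2
      have : k = l := by
        have hk' := ZMod.val_natCast_of_lt hk
        have hl' := ZMod.val_natCast_of_lt hl
        rw [← hk', ← hl', this]
      exact hkl this
    have hsum : μ Set.univ = ∑ k ∈ Finset.range 7, μ (((k : ℤ_[7]) + ·) '' B) := by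
      rw [hcover]
      exact measure_biUnion_finset hdisj (fun k _ => hcosetms _)
    rw [hμ] at hsum
    have : ∀ k ∈ Finset.range 7, μ (((k : ℤ_[7]) + ·) '' B) = μ B := fun k _ => himg _ _
    rw [Finset.sum_congr rfl this, Finset.sum_const, Finset.card_range, nsmul_eq_mul] at hsum
    rw [ENNReal.eq_div_iff (by norm_num) (by norm_num)]
    exact_mod_cast hsum.symm
  -- the scaling lemma : μ (m7 '' s) = μ s / 7
  set ν : Measure ℤ_[7] := (7 : ℝ≥0∞) • μ.comap m7 with hνdef
  have hνapp : ∀ s : Set ℤ_[7], ν s = 7 * μ (m7 '' s) := by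
    intro s
    rw [hνdef, Measure.smul_apply, smul_eq_mul, hm7me.comap_apply]
  have hm7univ : m7 '' Set.univ = B := by rw [Set.image_univ]
  haveI hνprob : IsProbabilityMeasure ν := by
    constructor
    rw [hνapp, hm7univ, hB7, ENNReal.mul_div_cancel' (by norm_num) (by norm_num)]
  haveI hνinv : ν.IsAddLeftInvariant := by
    constructor
    intro g
    ext s hs
    rw [Measure.map_apply (measurable_const_add g) hs, hνapp, hνapp]
    have key : m7 '' ((g + ·) ⁻¹' s) = ((7 * g) + ·) ⁻¹' (m7 '' s) := by
      ext y
      constructor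
      · rintro ⟨x, hx, rfl⟩
        exact ⟨g + x, hx, by dsimp [hm7def]; ring⟩
      · rintro ⟨x, hx, hxy⟩
        refine ⟨x - g, ?_, ?_⟩
        · simpa using hx
        · have hxy' : 7 * x = 7 * g + y := hxy
          show 7 * (x - g) = y
          rw [mul_sub, hxy']
          ring
    rw [key, measure_preimage_add]
  haveI hνopen : ν.IsOpenPosMeasure := by
    constructor
    intro U hU hne
    rw [hνapp]
    have hopen : IsOpen (m7 '' U) := by
      have hoe : IsOpenEmbedding m7 := ⟨hm7closed.toIsEmbedding, hBopen⟩
      exact hoe.isOpenMap U hU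
    have hpos : μ (m7 '' U) ≠ 0 := (hopen.measure_ne_zero μ (hne.image m7))
    simp [hpos]
  haveI : IsFiniteMeasureOnCompacts ν := inferInstance
  haveI : ν.IsAddHaarMeasure := ⟨⟩
  have hνμ : ν = μ := Measure.isAddHaarMeasure_eq_of_isProbabilityMeasure ν μ
  have hscale : ∀ s : Set ℤ_[7], μ (m7 '' s) = μ s / 7 := by
    intro s
    have h := hνapp s
    rw [hνμ] at h
    rw [ENNReal.eq_div_iff (by norm_num) (by norm_num)]
    exact h.symm
  -- basic facts about A
  have hAclosed : IsClosed A := hA ▸ isClosed_closure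
  have hAcomp : IsCompact A := hAclosed.isCompact
  have hBclosed : IsClosed B := hm7closed.isClosed_range
  have hm2cont : Continuous (fun x : ℤ_[7] => 2 + 7 * x) :=
    continuous_const.add (continuous_const.mul continuous_id)
  have h0C : (0 : ℤ_[7]) ∈ C := by
    rw [hC]
    left
    rw [Set.mem_add]
    have h00 : (0:ℤ_[7]) ∈ m7 '' Set.range (Int.cast : ℤ → ℤ_[7]) :=
      ⟨0, ⟨0, Int.cast_zero⟩, mul_zero 7⟩
    exact ⟨0, Set.mem_insert 0 {1}, 0, h00, add_zero 0⟩
  have h0A : (0 : ℤ_[7]) ∈ A := hA ▸ subset_closure h0C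
  -- closure of the scaled copy of the integers
  have hTclo : closure (m7 '' Set.range (Int.cast : ℤ → ℤ_[7])) = B := by
    apply subset_antisymm
    · exact closure_minimal (Set.image_subset_range _ _) hBclosed
    · intro b hb
      have hb' : b ∈ m7 '' closure (Set.range (Int.cast : ℤ → ℤ_[7])) := by
        rw [(PadicInt.denseRange_intCast).closure_eq, Set.image_univ]
        exact hb
      exact image_closure_subset_closure_image hm7cont hb'
  have hT1clo : closure (((1:ℤ_[7]) + ·) '' (m7 '' Set.range (Int.cast : ℤ → ℤ_[7])))
      = ({1} : Set ℤ_[7]) + B := by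
    apply subset_antisymm
    · apply closure_minimal
      · rw [hsing]
        exact Set.image_mono (subset_closure.trans (le_of_eq hTclo))
      · rw [hsing, Set.image_add_left]
        exact hBclosed.preimage (continuous_add_left _)
    · rw [hsing, ← hTclo]
      exact (image_closure_subset_closure_image (continuous_add_left _))
  -- the self-similarity equation for A
  have hAeq : A = (B ∪ (({1} : Set ℤ_[7]) + B)) ∪ (({2} : Set ℤ_[7]) + m7 '' A) := by
    have hsplit : ({0,1} : Set ℤ_[7]) + m7 '' Set.range (Int.cast : ℤ → ℤ_[7])
        = (m7 '' Set.range (Int.cast : ℤ → ℤ_[7]))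
          ∪ ((1:ℤ_[7]) + ·) '' (m7 '' Set.range (Int.cast : ℤ → ℤ_[7])) := by
      rw [Set.insert_eq, Set.union_add, Set.singleton_add, Set.singleton_add]
      congr 1
      simp
    have hm2A : closure ((fun x => 2 + 7 * x) '' C) = ({2} : Set ℤ_[7]) + m7 '' A := by
      have himg2 : ∀ s : Set ℤ_[7], (fun x => 2 + 7 * x) '' s = ({2} : Set ℤ_[7]) + m7 '' s := by
        intro s
        rw [hsing, Set.image_image]
      apply subset_antisymm
      · apply closure_minimal
        · rw [himg2]
          refine Set.add_subset_add_left (Set.image_mono ?_)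
          exact hA ▸ subset_closure
        · rw [hsing, Set.image_add_left]
          refine (IsClosed.preimage (continuous_add_left _) ?_)
          exact hm7closed.isClosedMap A hAclosed
      · rw [← himg2, hA]
        exact image_closure_subset_closure_image hm2cont
    conv_lhs => rw [hA, hC]
    rw [closure_union, hsplit, closure_union, hTclo, hT1clo, hm2A]
  -- generic tools for cosets
  have hμcoset : ∀ (c : ℤ_[7]) (s : Set ℤ_[7]), μ (({c} : Set ℤ_[7]) + s) = μ s := by
    intro c s; rw [hsing, himg]
  have hmscoset : ∀ (c : ℤ_[7]) {s : Set ℤ_[7]}, MeasurableSet s →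
      MeasurableSet (({c} : Set ℤ_[7]) + s) := by
    intro c s hs
    rw [hsing, Set.image_add_left]
    exact hs.preimage (measurable_const_add _)
  have hcosets : ∀ (a b : ℤ_[7]) (s t : Set ℤ_[7]), s ⊆ B → t ⊆ B → φ a ≠ φ b →
      Disjoint (({a} : Set ℤ_[7]) + s) (({b} : Set ℤ_[7]) + t) := by
    intro a b s t hs ht hab
    apply Set.disjoint_left.mpr
    intro x hxa hxb
    exact hab ((hφcoset a s hs x hxa).symm.trans (hφcoset b t ht x hxb))
  have hB0 : ({0} : Set ℤ_[7]) + B = B := by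
    rw [hsing]; simp
  have hm7A_B : m7 '' A ⊆ B := Set.image_subset_range _ _
  have hm7Ams : MeasurableSet (m7 '' A) := (hm7closed.isClosedMap A hAclosed).measurableSet
  -- measure equation for A
  have hφ0 : φ (0:ℤ_[7]) = 0 := map_zero φ
  have hφ1 : φ (1:ℤ_[7]) = 1 := map_one φ
  have hφ2 : φ (2:ℤ_[7]) = 2 := map_ofNat φ 2
  have hφ3 : φ (3:ℤ_[7]) = 3 := map_ofNat φ 3
  have hφ4 : φ (4:ℤ_[7]) = 4 := map_ofNat φ 4
  have hμArec : μ A = (2 * 1) / 7 + μ A / 7 := by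
    conv_lhs => rw [hAeq]
    have hd2 : Disjoint (B ∪ (({1} : Set ℤ_[7]) + B)) (({2} : Set ℤ_[7]) + m7 '' A) := by
      rw [Set.disjoint_union_left]
      constructor
      · have := hcosets 0 2 B (m7 '' A) (subset_refl B) hm7A_B (by rw [hφ0, hφ2]; decide)
        rwa [hB0] at this
      · exact hcosets 1 2 B (m7 '' A) (subset_refl B) hm7A_B (by rw [hφ1, hφ2]; decide)
    have hd1 : Disjoint B (({1} : Set ℤ_[7]) + B) := by
      have := hcosets 0 1 B B (subset_refl B) (subset_refl B) (by rw [hφ0, hφ1]; decide)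
      rwa [hB0] at this
    rw [measure_union hd2 (hmscoset 2 hm7Ams), measure_union hd1 (hmscoset 1 hBms),
      hμcoset, hμcoset, hB7, hscale]
    congr 1
    rw [ENNReal.div_add_div_same]
    norm_num
  -- sumset identities
  have hBaddB : B + B = B := by
    apply subset_antisymm
    · rintro x hx
      rw [Set.mem_add] at hx
      obtain ⟨a, ⟨u, rfl⟩, b, ⟨v, rfl⟩, rfl⟩ := hx
      exact ⟨u + v, by show 7 * (u + v) = m7 u + m7 v; show 7*(u+v) = 7*u + 7*v; ring⟩
    · intro b hb
      rw [Set.mem_add]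
      exact ⟨b, hb, 0, ⟨0, mul_zero 7⟩, add_zero b⟩
  have hBm7A : B + m7 '' A = B := by
    apply subset_antisymm
    · have h1 : B + m7 '' A ⊆ B + B := Set.add_subset_add_left hm7A_B
      rwa [hBaddB] at h1
    · intro b hb
      rw [Set.mem_add]
      exact ⟨b, hb, 0, ⟨0, h0A, mul_zero 7⟩, add_zero b⟩
  have himgadd : m7 '' A + m7 '' A = m7 '' (A + A) := by
    ext y
    simp only [Set.mem_add, Set.mem_image]
    constructor
    · rintro ⟨_, ⟨a, ha, rfl⟩, _, ⟨b, hb, rfl⟩, rfl⟩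
      exact ⟨a + b, ⟨a, ha, b, hb, rfl⟩, by show 7 * (a+b) = m7 a + m7 b; show 7*(a+b) = 7*a+7*b; ring⟩
    · rintro ⟨_, ⟨a, ha, b, hb, rfl⟩, rfl⟩
      exact ⟨m7 a, ⟨a, ha, rfl⟩, m7 b, ⟨b, hb, rfl⟩, by show 7*a + 7*b = 7*(a+b); ring⟩
  have h0101 : ({0,1} : Set ℤ_[7]) + ({0,1} : Set ℤ_[7]) = ({0,1,2} : Set ℤ_[7]) := by
    ext x
    simp only [Set.mem_add, Set.mem_insert_iff, Set.mem_singleton_iff]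
    constructor
    · rintro ⟨a, (rfl|rfl), b, (rfl|rfl), rfl⟩ <;> norm_num
    · rintro (rfl|rfl|rfl)
      · exact ⟨0, Or.inl rfl, 0, Or.inl rfl, by norm_num⟩
      · exact ⟨0, Or.inl rfl, 1, Or.inr rfl, by norm_num⟩
      · exact ⟨1, Or.inr rfl, 1, Or.inr rfl, by norm_num⟩
  have h012 : ({0,1} : Set ℤ_[7]) + ({2} : Set ℤ_[7]) = ({2,3} : Set ℤ_[7]) := by
    ext x
    simp only [Set.mem_add, Set.mem_insert_iff, Set.mem_singleton_iff]
    constructor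
    · rintro ⟨a, (rfl|rfl), b, rfl, rfl⟩ <;> norm_num
    · rintro (rfl|rfl)
      · exact ⟨0, Or.inl rfl, 2, rfl, by norm_num⟩
      · exact ⟨1, Or.inr rfl, 2, rfl, by norm_num⟩
  have h22 : ({2} : Set ℤ_[7]) + ({2} : Set ℤ_[7]) = ({4} : Set ℤ_[7]) := by
    ext x
    simp only [Set.mem_add, Set.mem_singleton_iff]
    constructor
    · rintro ⟨a, rfl, b, rfl, rfl⟩; norm_num
    · rintro rfl; exact ⟨2, rfl, 2, rfl, by norm_num⟩
  have hS01 : B ∪ (({1} : Set ℤ_[7]) + B) = ({0,1} : Set ℤ_[7]) + B := by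
    rw [Set.insert_eq, Set.union_add, hB0]
  -- the self-similarity equation for A + A
  have hAAeq : A + A = (({0,1,2,3} : Set ℤ_[7]) + B) ∪ (({4} : Set ℤ_[7]) + m7 '' (A + A)) := by
    conv_lhs => rw [hAeq]
    rw [hS01]
    rw [Set.add_union, Set.union_add, Set.union_add]
    have e1 : (({0,1} : Set ℤ_[7]) + B) + (({0,1} : Set ℤ_[7]) + B)
        = ({0,1,2} : Set ℤ_[7]) + B := by
      rw [add_add_add_comm, h0101, hBaddB]
    have e2 : (({0,1} : Set ℤ_[7]) + B) + (({2} : Set ℤ_[7]) + m7 '' A)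
        = ({2,3} : Set ℤ_[7]) + B := by
      rw [add_add_add_comm, h012, hBm7A]
    have e3 : (({2} : Set ℤ_[7]) + m7 '' A) + (({0,1} : Set ℤ_[7]) + B)
        = ({2,3} : Set ℤ_[7]) + B := by
      rw [add_comm (({2} : Set ℤ_[7]) + m7 '' A)]
      exact e2
    have e4 : (({2} : Set ℤ_[7]) + m7 '' A) + (({2} : Set ℤ_[7]) + m7 '' A)
        = ({4} : Set ℤ_[7]) + m7 '' (A + A) := by
      rw [add_add_add_comm, h22, himgadd]
    rw [e1, e2, e3, e4]
    have e5 : (({0,1,2} : Set ℤ_[7]) + B) ∪ (({2,3} : Set ℤ_[7]) + B)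
        = ({0,1,2,3} : Set ℤ_[7]) + B := by
      rw [← Set.union_add]
      congr 1
      ext x
      simp only [Set.mem_union, Set.mem_insert_iff, Set.mem_singleton_iff]
      tauto
    rw [← e5]
    ext x
    simp only [Set.mem_union]
    tauto
  -- measure equation for A + A
  have hAAcomp : IsCompact (A + A) := hAcomp.add hAcomp
  have hm7AAms : MeasurableSet (m7 '' (A + A)) :=
    (hm7closed.isClosedMap _ hAAcomp.isClosed).measurableSet
  have hm7AA_B : m7 '' (A + A) ⊆ B := Set.image_subset_range _ _
  have hsplit4 : ({0,1,2,3} : Set ℤ_[7]) + B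
      = (({0} : Set ℤ_[7]) + B) ∪ ((({1} : Set ℤ_[7]) + B) ∪ ((({2} : Set ℤ_[7]) + B)
        ∪ (({3} : Set ℤ_[7]) + B))) := by
    have : ({0,1,2,3} : Set ℤ_[7]) = {0} ∪ ({1} ∪ ({2} ∪ {3})) := by
      rw [Set.insert_eq, Set.insert_eq, Set.insert_eq]
    rw [this, Set.union_add, Set.union_add, Set.union_add]
  have hmuAArec : μ (A + A) = (2 * 2) / 7 + μ (A + A) / 7 := by
    conv_lhs => rw [hAAeq]
    have hdmain : Disjoint (({0,1,2,3} : Set ℤ_[7]) + B) (({4} : Set ℤ_[7]) + m7 '' (A + A)) := by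
      rw [hsplit4]
      rw [Set.disjoint_union_left, Set.disjoint_union_left, Set.disjoint_union_left]
      refine ⟨?_, ?_, ?_, ?_⟩
      · exact hcosets 0 4 B _ (subset_refl B) hm7AA_B (by rw [hφ0, hφ4]; decide)
      · exact hcosets 1 4 B _ (subset_refl B) hm7AA_B (by rw [hφ1, hφ4]; decide)
      · exact hcosets 2 4 B _ (subset_refl B) hm7AA_B (by rw [hφ2, hφ4]; decide)
      · exact hcosets 3 4 B _ (subset_refl B) hm7AA_B (by rw [hφ3, hφ4]; decide)
    rw [measure_union hdmain (hmscoset 4 hm7AAms)]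
    have hd3 : Disjoint (({2} : Set ℤ_[7]) + B) (({3} : Set ℤ_[7]) + B) :=
      hcosets 2 3 B B (subset_refl B) (subset_refl B) (by rw [hφ2, hφ3]; decide)
    have hd2 : Disjoint (({1} : Set ℤ_[7]) + B) ((({2} : Set ℤ_[7]) + B) ∪ (({3} : Set ℤ_[7]) + B)) := by
      rw [Set.disjoint_union_right]
      exact ⟨hcosets 1 2 B B (subset_refl B) (subset_refl B) (by rw [hφ1, hφ2]; decide),
        hcosets 1 3 B B (subset_refl B) (subset_refl B) (by rw [hφ1, hφ3]; decide)⟩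
    have hd1 : Disjoint (({0} : Set ℤ_[7]) + B) ((({1} : Set ℤ_[7]) + B) ∪ ((({2} : Set ℤ_[7]) + B)
        ∪ (({3} : Set ℤ_[7]) + B))) := by
      rw [Set.disjoint_union_right, Set.disjoint_union_right]
      exact ⟨hcosets 0 1 B B (subset_refl B) (subset_refl B) (by rw [hφ0, hφ1]; decide),
        hcosets 0 2 B B (subset_refl B) (subset_refl B) (by rw [hφ0, hφ2]; decide),
        hcosets 0 3 B B (subset_refl B) (subset_refl B) (by rw [hφ0, hφ3]; decide)⟩
    have hmsB : ∀ c : ℤ_[7], MeasurableSet (({c} : Set ℤ_[7]) + B) := fun c => hmscoset c hBms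
    rw [hsplit4, measure_union hd1 ((hmsB 1).union ((hmsB 2).union (hmsB 3))),
      measure_union hd2 ((hmsB 2).union (hmsB 3)), measure_union hd3 (hmsB 3),
      hμcoset, hμcoset, hμcoset, hμcoset, hμcoset, hB7, hscale]
    congr 1
    rw [ENNReal.div_add_div_same, ENNReal.div_add_div_same, ENNReal.div_add_div_same]
    norm_num
  -- solving the fixed point equations
  have solve : ∀ x n : ℝ≥0∞, x ≠ ⊤ → x = (2 * n) / 7 + x / 7 → 3 * x = n := by
    intro x n hx h
    have h1 : 7 * x = 2 * n + x := by
      conv_lhs => rw [h]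
      rw [mul_add, ENNReal.mul_div_cancel' (by norm_num) (by norm_num),
        ENNReal.mul_div_cancel' (by norm_num) (by norm_num)]
    have h2 : 2 * (3 * x) + x = 2 * n + x := by
      rw [← h1]; ring
    have h3 : 2 * (3 * x) = 2 * n := (ENNReal.add_left_inj hx).mp h2
    exact (ENNReal.mul_right_inj (by norm_num) (by norm_num)).mp h3
  have hxA : μ A = 1 / 3 := by
    rw [ENNReal.eq_div_iff (by norm_num) (by norm_num)]
    exact solve (μ A) 1 (measure_ne_top μ A) (by rw [← hμArec])
  have hxAA : μ (A + A) = 2 / 3 := by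
    rw [ENNReal.eq_div_iff (by norm_num) (by norm_num)]
    exact solve (μ (A + A)) 2 (measure_ne_top μ (A + A)) (by rw [← hmuAArec])
  refine ⟨hxA, hxAA, ?_⟩
  rw [hxA, hxAA, ENNReal.div_add_div_same]
  norm_num
end
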